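/- arXiv:2408.11437 — 2 statements merged into one kernel-verified Lean document; each statement's English description precedes it below -/
import Mathlib

section
/- Let X and U be Hausdorff locally convex spaces, B ∈ L(U;X) and (T(t))_{t≥0} a semigroup on X. If the family (T(t)B)_{t∈[0,r]} is of bounded semivariation for some r > 0, then it is of bounded semivariation for all r > 0. -/
open Filter Topology Set Classical
open scoped ENNReal

/-- A partition `a = d₀ < d₁ < ⋯ < dₙ = b` of the interval `[a,b]`. -/
structure IntervalPartition (a b : ℝ) where
  n : ℕ
  points : ℕ → ℝ
  first_eq : points 0 = a
  last_eq : points n = b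
  increasing : ∀ i, i < n → points i < points (i + 1)

section Defs

variable {X Y U : Type*}
variable [AddCommGroup X] [Module ℝ X] [UniformSpace X] [IsUniformAddGroup X] [ContinuousSMul ℝ X]
variable [AddCommGroup Y] [Module ℝ Y] [UniformSpace Y] [IsUniformAddGroup Y] [ContinuousSMul ℝ Y]
variable [AddCommGroup U] [Module ℝ U] [UniformSpace U] [IsUniformAddGroup U] [ContinuousSMul ℝ U]

/-- The semivariation `SV_{q,p}(α)` of `α : [a,b] → L(X;Y)` (value in `ℝ≥0∞`). -/
noncomputable def SV (α : ℝ → X →L[ℝ] Y) (q : Seminorm ℝ Y) (p : Seminorm ℝ X)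
    (a b : ℝ) : ℝ≥0∞ :=
  ⨆ (d : IntervalPartition a b) (x : ℕ → X) (_ : ∀ i, i < d.n → p (x i) ≤ 1),
    ENNReal.ofReal
      (q (∑ i ∈ Finset.range d.n,
        (α (d.points (i + 1)) (x i) - α (d.points i) (x i))))

/-- `α : [a,b] → L(X;Y)` is of bounded semivariation. -/
def BoundedSemivariation (α : ℝ → X →L[ℝ] Y) (a b : ℝ) : Prop :=
  ∀ q : Seminorm ℝ Y, Continuous ⇑q →
    ∃ p : Seminorm ℝ X, Continuous ⇑p ∧ SV α q p a b < ⊤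

/-- `y` is the Riemann–Stieltjes integral `∫_a^b f dα`. -/
def IsRSIntegral (α : ℝ → X →L[ℝ] Y) (f : ℝ → X) (a b : ℝ) (y : Y) : Prop :=
  ∀ q : Seminorm ℝ Y, Continuous ⇑q → ∀ ε : ℝ, 0 < ε → ∃ δ : ℝ, 0 < δ ∧
    ∀ (d : IntervalPartition a b) (c : ℕ → ℝ),
      (∀ i, i < d.n → d.points (i + 1) - d.points i < δ) →
      (∀ i, i < d.n → c i ∈ Set.Icc (d.points i) (d.points (i + 1))) →
      q ((∑ i ∈ Finset.range d.n,
        (α (d.points (i + 1)) (f (c i)) - α (d.points i) (f (c i)))) - y) < ε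

/-- The Riemann–Stieltjes integral `∫_a^b f dα` (junk value `0` if it does not exist). -/
noncomputable def RSIntegral (α : ℝ → X →L[ℝ] Y) (f : ℝ → X) (a b : ℝ) : Y :=
  if h : ∃ y, IsRSIntegral α f a b y then h.choose else 0

/-- `y` is the Riemann integral `∫_a^b f(s) ds`. -/
def IsRiemannIntegral (f : ℝ → X) (a b : ℝ) (y : X) : Prop :=
  ∀ q : Seminorm ℝ X, Continuous ⇑q → ∀ ε : ℝ, 0 < ε → ∃ δ : ℝ, 0 < δ ∧
    ∀ (d : IntervalPartition a b) (c : ℕ → ℝ),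
      (∀ i, i < d.n → d.points (i + 1) - d.points i < δ) →
      (∀ i, i < d.n → c i ∈ Set.Icc (d.points i) (d.points (i + 1))) →
      q ((∑ i ∈ Finset.range d.n, (d.points (i + 1) - d.points i) • f (c i)) - y) < ε

/-- The Riemann integral `∫_a^b f(s) ds` (junk value `0` if it does not exist). -/
noncomputable def riemannIntegral (f : ℝ → X) (a b : ℝ) : X :=
  if h : ∃ y, IsRiemannIntegral f a b y then h.choose else 0

/-- Sequential completeness: every Cauchy sequence converges. -/
def SequentiallyComplete (Z : Type*) [UniformSpace Z] : Prop :=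
  ∀ u : ℕ → Z, CauchySeq u → ∃ z, Filter.Tendsto u Filter.atTop (𝓝 z)

/-- A strongly continuous, locally equicontinuous semigroup. -/
def IsSCLESemigroup (T : ℝ → X →L[ℝ] X) : Prop :=
  T 0 = ContinuousLinearMap.id ℝ X ∧
  (∀ s t : ℝ, 0 ≤ s → 0 ≤ t → T (s + t) = (T s).comp (T t)) ∧
  (∀ x : X, ContinuousOn (fun t => T t x) (Set.Ici (0:ℝ))) ∧
  (∀ q : Seminorm ℝ X, Continuous ⇑q → ∀ t₀ : ℝ, 0 ≤ t₀ →
    ∃ p : Seminorm ℝ X, Continuous ⇑p ∧ ∃ C : ℝ, 0 ≤ C ∧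
      ∀ t ∈ Set.Icc (0:ℝ) t₀, ∀ x : X, q (T t x) ≤ C * p x)

/-- A strongly continuous, quasi-equicontinuous semigroup. -/
def IsSCQESemigroup (T : ℝ → X →L[ℝ] X) : Prop :=
  T 0 = ContinuousLinearMap.id ℝ X ∧
  (∀ s t : ℝ, 0 ≤ s → 0 ≤ t → T (s + t) = (T s).comp (T t)) ∧
  (∀ x : X, ContinuousOn (fun t => T t x) (Set.Ici (0:ℝ))) ∧
  (∃ ω : ℝ, ∀ q : Seminorm ℝ X, Continuous ⇑q →
    ∃ p : Seminorm ℝ X, Continuous ⇑p ∧ ∃ C : ℝ, 0 ≤ C ∧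
      ∀ t : ℝ, 0 ≤ t → ∀ x : X, q (Real.exp (-ω * t) • T t x) ≤ C * p x)

/-- The domain of the generator of a semigroup. -/
def genDomain (T : ℝ → X →L[ℝ] X) : Set X :=
  {x | ∃ y : X, Filter.Tendsto (fun t : ℝ => t⁻¹ • (T t x - x)) (𝓝[>] (0:ℝ)) (𝓝 y)}

/-- The generator of a semigroup (junk value `0` outside of its domain). -/
noncomputable def generator (T : ℝ → X →L[ℝ] X) (x : X) : X :=
  if h : ∃ y : X, Filter.Tendsto (fun t : ℝ => t⁻¹ • (T t x - x)) (𝓝[>] (0:ℝ)) (𝓝 y)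
  then h.choose else 0

/-- The convolution `(T∗f)(t) = ∫_0^t T(t-s) f(s) ds`. -/
noncomputable def sgConv (T : ℝ → X →L[ℝ] X) (f : ℝ → X) (t : ℝ) : X :=
  riemannIntegral (fun s => T (t - s) (f s)) 0 t

/-- `v` is the derivative of `u` at `t` within the set `s` (limit of difference quotients). -/
def HasDerivWithinSetLC (u : ℝ → X) (v : X) (s : Set ℝ) (t : ℝ) : Prop :=
  Filter.Tendsto (fun h : ℝ => h⁻¹ • (u (t + h) - u t))
    (𝓝[{h : ℝ | h ≠ 0 ∧ t + h ∈ s}] (0:ℝ)) (𝓝 v)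

/-- `u` is continuously differentiable on `s` with derivative `u'`. -/
def IsC1On (u u' : ℝ → X) (s : Set ℝ) : Prop :=
  ContinuousOn u s ∧ ContinuousOn u' s ∧ ∀ t ∈ s, HasDerivWithinSetLC u (u' t) s t

/-- `u` is a strict solution of `u' = Au + g` on `[0,r]`, `u(0) = x`. -/
def IsStrictSolution (T : ℝ → X →L[ℝ] X) (g : ℝ → X) (x : X) (r : ℝ) (u : ℝ → X) : Prop :=
  u 0 = x ∧ (∀ t ∈ Set.Icc (0:ℝ) r, u t ∈ genDomain T) ∧
  ∃ u' : ℝ → X, IsC1On u u' (Set.Icc (0:ℝ) r) ∧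
    ∀ t ∈ Set.Icc (0:ℝ) r, u' t = generator T (u t) + g t

/-- `(T(t))` satisfies C-maximal regularity for `(B,r)`. -/
def CMaxReg (T : ℝ → X →L[ℝ] X) (B : U →L[ℝ] X) (r : ℝ) : Prop :=
  ∀ f : ℝ → U, ContinuousOn f (Set.Icc (0:ℝ) r) →
    (∀ t ∈ Set.Icc (0:ℝ) r, sgConv T (fun s => B (f s)) t ∈ genDomain T) ∧
    ContinuousOn (fun t => generator T (sgConv T (fun s => B (f s)) t)) (Set.Icc (0:ℝ) r)

end Defs

section Aux

variable {X Y U : Type*}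
variable [AddCommGroup X] [Module ℝ X] [UniformSpace X] [IsUniformAddGroup X] [ContinuousSMul ℝ X]
variable [AddCommGroup Y] [Module ℝ Y] [UniformSpace Y] [IsUniformAddGroup Y] [ContinuousSMul ℝ Y]
variable [AddCommGroup U] [Module ℝ U] [UniformSpace U] [IsUniformAddGroup U] [ContinuousSMul ℝ U]

lemma IntervalPartition.monotone {a b : ℝ} (d : IntervalPartition a b) {i j : ℕ} (hij : i ≤ j) (hj : j ≤ d.n) :
    d.points i ≤ d.points j := by
  induction j with
  | zero => simp_all
  | succ m ih =>
    rcases Nat.lt_or_ge i (m + 1) with h | h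
    · exact le_trans (ih (Nat.lt_succ_iff.mp h) (le_trans (Nat.le_succ m) hj))
        (le_of_lt (d.increasing m (by omega)))
    · have : i = m + 1 := le_antisymm hij h
      simp [this]

lemma SV_anti {α : ℝ → X →L[ℝ] Y} {q : Seminorm ℝ Y} {p p' : Seminorm ℝ X} (h : p' ≤ p)
    {a b : ℝ} : SV α q p a b ≤ SV α q p' a b := by
  refine iSup_le fun d => iSup_le fun x => iSup_le fun hx => ?_
  exact le_iSup_of_le d (le_iSup_of_le x
    (le_iSup_of_le (fun i hi => le_trans (h _) (hx i hi)) le_rfl))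

lemma SV_ext {α : ℝ → X →L[ℝ] Y} {q : Seminorm ℝ Y} {p : Seminorm ℝ X} {a b b' : ℝ}
    (h : b' < b) : SV α q p a b' ≤ SV α q p a b := by
  refine iSup_le fun d => iSup_le fun x => iSup_le fun hx => ?_
  let d' : IntervalPartition a b :=
    { n := d.n + 1
      points := fun i => if i ≤ d.n then d.points i else b
      first_eq := by simp [d.first_eq]
      last_eq := by simp
      increasing := by
        intro i hi
        rcases Nat.lt_or_ge i d.n with h' | h'
        · rw [if_pos (le_of_lt h'), if_pos (Nat.succ_le_of_lt h')]
          exact d.increasing i h'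
        · have : i = d.n := by omega
          subst this
          rw [if_pos le_rfl, if_neg (by omega), d.last_eq]
          exact h }
  let x' : ℕ → X := fun i => if i < d.n then x i else 0
  have hx' : ∀ i, i < d'.n → p (x' i) ≤ 1 := by
    intro i hi
    by_cases h' : i < d.n
    · simpa [x', h'] using hx i h'
    · simp [x', h']
  refine le_iSup_of_le d' (le_iSup_of_le x' (le_iSup_of_le hx' (le_of_eq ?_)))
  congr 1
  congr 1
  have hd'n : d'.n = d.n + 1 := rfl
  rw [hd'n, Finset.sum_range_succ]
  have hlast : α (d'.points (d.n + 1)) (x' d.n) - α (d'.points d.n) (x' d.n) = 0 := by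
    simp [x', d']
  rw [hlast, add_zero]
  refine Finset.sum_congr rfl fun i hi => ?_
  rw [Finset.mem_range] at hi
  have h1 : d'.points i = d.points i := if_pos (le_of_lt hi)
  have h2 : d'.points (i + 1) = d.points (i + 1) := if_pos hi
  have h3 : x' i = x i := if_pos hi
  rw [h1, h2, h3]

lemma SV_cat {α : ℝ → X →L[ℝ] Y} {q : Seminorm ℝ Y} {p : Seminorm ℝ X} {a b c : ℝ}
    (hab : a < b) (hbc : b < c) :
    SV α q p a c ≤ SV α q p a b + SV α q p b c := by
  classical
  refine iSup_le fun d => iSup_le fun x => iSup_le fun hx => ?_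
  set n := d.n with hn
  set g : ℕ → Y := fun i => α (d.points (i + 1)) (x i) - α (d.points i) (x i) with hg
  set k := Nat.findGreatest (fun i => d.points i < b) n with hk
  have hk_le : k ≤ n := Nat.findGreatest_le n
  have hPk : d.points k < b := by
    have h0 : d.points 0 < b := by rw [d.first_eq]; exact hab
    exact Nat.findGreatest_spec (P := fun i => d.points i < b) (Nat.zero_le n) h0
  have hkn : k < n := by
    rcases lt_or_eq_of_le hk_le with h | h
    · exact h
    · exfalso; rw [h, d.last_eq] at hPk; linarith
  have hk1 : b ≤ d.points (k + 1) := by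
    by_contra h
    exact Nat.findGreatest_is_greatest (Nat.lt_succ_self k) (by omega) (by linarith)
  -- left partition
  let dL : IntervalPartition a b :=
    { n := k + 1
      points := fun i => if i ≤ k then d.points i else b
      first_eq := by simp [d.first_eq]
      last_eq := by simp
      increasing := by
        intro i hi
        rcases Nat.lt_or_ge i k with h | h
        · rw [if_pos (le_of_lt h), if_pos (Nat.succ_le_of_lt h)]
          exact d.increasing i (by omega)
        · have : i = k := by omega
          subst this
          rw [if_pos le_rfl, if_neg (by omega)]
          exact hPk }
  have hxL : ∀ i, i < dL.n → p (x i) ≤ 1 := fun i hi => hx i (by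
    have : dL.n = k + 1 := rfl
    omega)
  set L : Y := ∑ i ∈ Finset.range dL.n, (α (dL.points (i + 1)) (x i) - α (dL.points i) (x i))
    with hL
  have hLval : L = (∑ i ∈ Finset.range k, g i) + (α b (x k) - α (d.points k) (x k)) := by
    rw [hL, show dL.n = k + 1 from rfl, Finset.sum_range_succ]
    congr 1
    · refine Finset.sum_congr rfl fun i hi => ?_
      rw [Finset.mem_range] at hi
      have h1 : dL.points i = d.points i := if_pos (le_of_lt hi)
      have h2 : dL.points (i + 1) = d.points (i + 1) := if_pos hi
      rw [h1, h2]
    · have h1 : dL.points k = d.points k := if_pos le_rfl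
      have h2 : dL.points (k + 1) = b := if_neg (by omega)
      rw [h1, h2]
  have hLle : ENNReal.ofReal (q L) ≤ SV α q p a b :=
    le_iSup_of_le dL (le_iSup_of_le x (le_iSup_of_le hxL le_rfl))
  -- split into two cases depending on whether d.points (k+1) = b
  rcases eq_or_lt_of_le hk1 with heq | hlt
  · -- case b = d.points (k+1)
    let dR : IntervalPartition b c :=
      { n := n - (k + 1)
        points := fun i => d.points (k + 1 + i)
        first_eq := by simpa using heq.symm
        last_eq := by
          show d.points (k + 1 + (n - (k + 1))) = c
          rw [show k + 1 + (n - (k + 1)) = n by omega, d.last_eq]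
        increasing := by
          intro i hi
          show d.points (k + 1 + i) < d.points (k + 1 + (i + 1))
          rw [show k + 1 + (i + 1) = (k + 1 + i) + 1 by omega]
          exact d.increasing (k + 1 + i) (by omega) }
    let xR : ℕ → X := fun i => x (k + 1 + i)
    have hxR : ∀ i, i < dR.n → p (xR i) ≤ 1 := fun i hi => hx (k + 1 + i) (by
      have : dR.n = n - (k + 1) := rfl
      omega)
    set R : Y := ∑ i ∈ Finset.range dR.n, (α (dR.points (i + 1)) (xR i) - α (dR.points i) (xR i))
      with hR
    have hRval : R = ∑ i ∈ Finset.range (n - (k + 1)), g (k + 1 + i) := by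
      rw [hR]
      refine Finset.sum_congr rfl fun i hi => ?_
      show α (d.points (k + 1 + (i + 1))) (x (k + 1 + i)) - α (d.points (k + 1 + i)) (x (k + 1 + i))
          = g (k + 1 + i)
      rw [show k + 1 + (i + 1) = (k + 1 + i) + 1 by omega]
    have hRle : ENNReal.ofReal (q R) ≤ SV α q p b c :=
      le_iSup_of_le dR (le_iSup_of_le xR (le_iSup_of_le hxR le_rfl))
    have hsum : (∑ i ∈ Finset.range n, g i) = L + R := by
      have hsplit := Finset.sum_range_add g (k + 1) (n - (k + 1))
      rw [show k + 1 + (n - (k + 1)) = n by omega] at hsplit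
      rw [hLval, hRval, hsplit, Finset.sum_range_succ]
      have hgk : g k = α (d.points (k + 1)) (x k) - α (d.points k) (x k) := rfl
      rw [hgk, ← heq]
    calc ENNReal.ofReal (q (∑ i ∈ Finset.range d.n, (α (d.points (i + 1)) (x i) - α (d.points i) (x i))))
        = ENNReal.ofReal (q (L + R)) := by rw [← hsum]
      _ ≤ ENNReal.ofReal (q L + q R) := ENNReal.ofReal_le_ofReal (map_add_le_add q L R)
      _ ≤ ENNReal.ofReal (q L) + ENNReal.ofReal (q R) := ENNReal.ofReal_add_le
      _ ≤ SV α q p a b + SV α q p b c := add_le_add hLle hRle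
  · -- case b < d.points (k+1)
    let dR : IntervalPartition b c :=
      { n := n - k
        points := fun i => if i = 0 then b else d.points (k + i)
        first_eq := rfl
        last_eq := by
          rw [if_neg (by omega), show k + (n - k) = n by omega, d.last_eq]
        increasing := by
          intro i hi
          rcases Nat.eq_zero_or_pos i with h | h
          · subst h
            rw [if_pos rfl, if_neg (by omega)]
            exact hlt
          · rw [if_neg (by omega), if_neg (by omega),
              show k + (i + 1) = (k + i) + 1 by omega]
            exact d.increasing (k + i) (by omega) }
    let xR : ℕ → X := fun i => x (k + i)
    have hxR : ∀ i, i < dR.n → p (xR i) ≤ 1 := fun i hi => hx (k + i) (by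
      have : dR.n = n - k := rfl
      omega)
    set R : Y := ∑ i ∈ Finset.range dR.n, (α (dR.points (i + 1)) (xR i) - α (dR.points i) (xR i))
      with hR
    have hRval : R = (∑ i ∈ Finset.range (n - (k + 1)), g (k + 1 + i))
        + (α (d.points (k + 1)) (x k) - α b (x k)) := by
      rw [hR, show dR.n = n - k from rfl, show n - k = (n - (k + 1)) + 1 by omega,
        Finset.sum_range_succ']
      congr 1
      · refine Finset.sum_congr rfl fun i hi => ?_
        have h1 : dR.points (i + 1) = d.points (k + (i + 1)) := by
          show (if i + 1 = 0 then b else d.points (k + (i + 1))) = d.points (k + (i + 1))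
          rw [if_neg (Nat.succ_ne_zero i)]
        have h2 : dR.points (i + 1 + 1) = d.points (k + (i + 1 + 1)) := by
          show (if i + 1 + 1 = 0 then b else d.points (k + (i + 1 + 1))) = d.points (k + (i + 1 + 1))
          rw [if_neg (Nat.succ_ne_zero (i + 1))]
        have hxi : xR (i + 1) = x (k + 1 + i) := by
          show x (k + (i + 1)) = x (k + 1 + i); congr 1; omega
        rw [h1, h2, hxi, hg]
        rw [show k + (i + 1 + 1) = (k + 1 + i) + 1 by omega,
          show k + (i + 1) = k + 1 + i by omega]
    have hRle : ENNReal.ofReal (q R) ≤ SV α q p b c :=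
      le_iSup_of_le dR (le_iSup_of_le xR (le_iSup_of_le hxR le_rfl))
    have hsum : (∑ i ∈ Finset.range n, g i) = L + R := by
      rw [hLval, hRval]
      have hsplit := Finset.sum_range_add g (k + 1) (n - (k + 1))
      rw [show k + 1 + (n - (k + 1)) = n by omega] at hsplit
      rw [hsplit, Finset.sum_range_succ]
      have hgk : g k = α (d.points (k + 1)) (x k) - α (d.points k) (x k) := rfl
      rw [hgk]
      abel
    calc ENNReal.ofReal (q (∑ i ∈ Finset.range d.n, (α (d.points (i + 1)) (x i) - α (d.points i) (x i))))
        = ENNReal.ofReal (q (L + R)) := by rw [← hsum]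
      _ ≤ ENNReal.ofReal (q L + q R) := ENNReal.ofReal_le_ofReal (map_add_le_add q L R)
      _ ≤ ENNReal.ofReal (q L) + ENNReal.ofReal (q R) := ENNReal.ofReal_add_le
      _ ≤ SV α q p a b + SV α q p b c := add_le_add hLle hRle

lemma SV_shift (T : ℝ → X →L[ℝ] X)
    (hTsg : ∀ s t : ℝ, 0 ≤ s → 0 ≤ t → T (s + t) = (T s).comp (T t))
    (B : U →L[ℝ] X) {q : Seminorm ℝ X} {p : Seminorm ℝ U} {τ r : ℝ} (hτ : 0 ≤ τ) :
    SV (fun t => (T t).comp B) q p τ (τ + r) ≤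
      SV (fun t => (T t).comp B) (q.comp (T τ : X →ₗ[ℝ] X)) p 0 r := by
  refine iSup_le fun d => iSup_le fun x => iSup_le fun hx => ?_
  let d' : IntervalPartition 0 r :=
    { n := d.n
      points := fun i => d.points i - τ
      first_eq := by show d.points 0 - τ = 0; rw [d.first_eq]; ring
      last_eq := by show d.points d.n - τ = r; rw [d.last_eq]; ring
      increasing := fun i hi => sub_lt_sub_right (d.increasing i hi) τ }
  have hpt : ∀ j, j ≤ d.n → ∀ u : U,
      T (d.points j) (B u) = T τ (T (d.points j - τ) (B u)) := by
    intro j hj u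
    have h0 : 0 ≤ d.points j - τ := by
      have := d.monotone (Nat.zero_le j) hj
      rw [d.first_eq] at this
      linarith
    have := hTsg τ (d.points j - τ) hτ h0
    rw [show τ + (d.points j - τ) = d.points j by ring] at this
    rw [this]
    rfl
  refine le_iSup_of_le d' (le_iSup_of_le x (le_iSup_of_le hx (le_of_eq ?_)))
  congr 1
  have : (∑ i ∈ Finset.range d.n,
        (((T (d.points (i + 1))).comp B) (x i) - ((T (d.points i)).comp B) (x i)))
      = T τ (∑ i ∈ Finset.range d'.n,
        (((T (d'.points (i + 1))).comp B) (x i) - ((T (d'.points i)).comp B) (x i))) := by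
    rw [map_sum]
    refine Finset.sum_congr rfl fun i hi => ?_
    rw [Finset.mem_range] at hi
    rw [map_sub]
    show T (d.points (i + 1)) (B (x i)) - T (d.points i) (B (x i)) = _
    have hdd : d'.n = d.n := rfl
    rw [hpt (i + 1) (by omega) (x i), hpt i (by omega) (x i)]
    rfl
  rw [this]
  rfl

end Aux

theorem stmt12 {X U : Type*} [AddCommGroup X] [Module ℝ X] [UniformSpace X] [IsUniformAddGroup X]
    [ContinuousSMul ℝ X] [LocallyConvexSpace ℝ X] [T2Space X]
    [AddCommGroup U] [Module ℝ U] [UniformSpace U] [IsUniformAddGroup U]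
    [ContinuousSMul ℝ U] [LocallyConvexSpace ℝ U] [T2Space U]
    (T : ℝ → X →L[ℝ] X)
    (hT0 : T 0 = ContinuousLinearMap.id ℝ X)
    (hTsg : ∀ s t : ℝ, 0 ≤ s → 0 ≤ t → T (s + t) = (T s).comp (T t))
    (B : U →L[ℝ] X)
    (r : ℝ) (hr : 0 < r)
    (hsv : BoundedSemivariation (fun t => (T t).comp B) 0 r) :
    ∀ r' : ℝ, 0 < r' → BoundedSemivariation (fun t => (T t).comp B) 0 r' := by
  set α : ℝ → U →L[ℝ] X := fun t => (T t).comp B with hα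
  have key : ∀ N : ℕ, BoundedSemivariation α 0 ((N : ℝ) * r + r) := by
    intro N
    induction N with
    | zero => simpa using hsv
    | succ N ih =>
      intro q hq
      obtain ⟨p1, hp1c, hp1⟩ := ih q hq
      set τ : ℝ := (N : ℝ) * r + r with hτdef
      have hτ0 : 0 < τ := by positivity
      set q' : Seminorm ℝ X := q.comp (T τ : X →ₗ[ℝ] X) with hq'
      have hq'c : Continuous ⇑q' := by
        have h : ⇑q' = fun y => q (T τ y) := funext fun y => rfl
        rw [h]
        exact hq.comp (T τ).continuous
      obtain ⟨p2, hp2c, hp2⟩ := hsv q' hq'c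
      refine ⟨p1 ⊔ p2, ?_, ?_⟩
      · rw [Seminorm.coe_sup]
        exact hp1c.max hp2c
      · have hcat : SV α q (p1 ⊔ p2) 0 ((↑(N + 1) : ℝ) * r + r)
            ≤ SV α q (p1 ⊔ p2) 0 τ + SV α q (p1 ⊔ p2) τ (τ + r) := by
          have he : ((↑(N + 1) : ℝ) * r + r) = τ + r := by push_cast; ring
          rw [he]
          exact SV_cat hτ0 (by linarith)
        have h1 : SV α q (p1 ⊔ p2) 0 τ ≤ SV α q p1 0 τ := SV_anti le_sup_left
        have h2 : SV α q (p1 ⊔ p2) τ (τ + r) ≤ SV α q' p2 0 r :=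
          le_trans (SV_anti le_sup_right) (SV_shift T hTsg B (le_of_lt hτ0))
        calc SV α q (p1 ⊔ p2) 0 ((↑(N + 1) : ℝ) * r + r)
            ≤ SV α q p1 0 τ + SV α q' p2 0 r := le_trans hcat (add_le_add h1 h2)
          _ < ⊤ := ENNReal.add_lt_top.mpr ⟨hp1, hp2⟩
  intro r' hr' q hq
  obtain ⟨N, hN⟩ := exists_nat_gt (r' / r)
  have hr'N : r' < (N : ℝ) * r := (div_lt_iff₀ hr).mp hN
  obtain ⟨p, hpc, hp⟩ := key N q hq
  exact ⟨p, hpc, lt_of_le_of_lt (SV_ext (by linarith)) hp⟩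
end

section
/- Let r > 0, X be a complete Hausdorff locally convex space and (T(t))_{t≥0} a strongly continuous quasi-equicontinuous semigroup on X with generator (A, D(A)) such that 0 ∈ ρ(A). Let U be a Hausdorff locally convex space and B ∈ L(U; X_{−1}). Then the following are equivalent: (a) (T∗A_{−1}^{−1}Bf)(t) ∈ D(A) for all f ∈ C([0,r];U) and t ∈ [0,r]; (b) B is C-admissible for r. If these hold, then (T_{−1}∗Bf)(t) = A(T∗A_{−1}^{−1}Bf)(t) for all f ∈ C([0,r];U) and t ∈ [0,r]. -/
open Filter Topology Set Classical
open scoped ENNReal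

section Sem
open Filter Topology Set Uniformity
set_option linter.unusedSectionVars false
variable {X : Type*}
variable [AddCommGroup X] [Module ℝ X] [UniformSpace X] [IsUniformAddGroup X] [ContinuousSMul ℝ X]
variable [LocallyConvexSpace ℝ X]

lemma exists_sem (V : Set X) (hV : V ∈ 𝓝 (0:X)) :
    ∃ (q : Seminorm ℝ X) (r : ℝ), Continuous ⇑q ∧ 0 < r ∧ ∀ x, q x < r → x ∈ V := by
  have hws : WithSeminorms (gaugeSeminormFamily ℝ X) := with_gaugeSeminormFamily
  rcases hws.hasBasis.mem_iff.mp hV with ⟨s, hs, hsub⟩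
  rcases (gaugeSeminormFamily ℝ X).basisSets_iff.mp hs with ⟨F, r, hr, rfl⟩
  refine ⟨F.sup (gaugeSeminormFamily ℝ X), r, ?_, hr, fun x hx => hsub ?_⟩
  · exact Seminorm.continuous (r := r) (hws.hasBasis.mem_of_mem hs)
  · simpa [Seminorm.mem_ball_zero] using hx

lemma eq_zero_of_sem [T2Space X] (x : X)
    (h : ∀ q : Seminorm ℝ X, Continuous ⇑q → ∀ ε : ℝ, 0 < ε → q x < ε) : x = 0 := by
  by_contra hx
  have hws : WithSeminorms (gaugeSeminormFamily ℝ X) := with_gaugeSeminormFamily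
  rcases hws.separating_of_T1 x hx with ⟨i, hi⟩
  have hc : Continuous ⇑(gaugeSeminormFamily ℝ X i) := hws.continuous_seminorm i
  have := h _ hc ((gaugeSeminormFamily ℝ X i) x) (lt_of_le_of_ne (apply_nonneg _ _) (Ne.symm hi))
  exact lt_irrefl _ this

lemma tendsto_of_sem {ι : Type*} {l : Filter ι} {u : ι → X} {x : X}
    (h : ∀ q : Seminorm ℝ X, Continuous ⇑q → ∀ ε : ℝ, 0 < ε → ∀ᶠ i in l, q (u i - x) < ε) :
    Tendsto u l (𝓝 x) := by
  rw [← tendsto_sub_nhds_zero_iff]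
  intro V hV
  rcases exists_sem V hV with ⟨q, r, hq, hr, hsub⟩
  exact mem_map.mpr ((h q hq r hr).mono fun i hi => hsub _ hi)

lemma cauchySeq_of_sem {u : ℕ → X}
    (h : ∀ q : Seminorm ℝ X, Continuous ⇑q → ∀ ε : ℝ, 0 < ε →
      ∃ N, ∀ m ≥ N, ∀ n ≥ N, q (u m - u n) < ε) : CauchySeq u := by
  rw [cauchySeq_iff]
  intro V hV
  rw [uniformity_eq_comap_nhds_zero X, Filter.mem_comap] at hV
  rcases hV with ⟨W, hW, hsub⟩
  rcases exists_sem W hW with ⟨q, r, hq, hr, hWsub⟩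
  rcases h q hq r hr with ⟨N, hN⟩
  exact ⟨N, fun k hk l hl => hsub (by exact hWsub _ (by simpa using hN l hl k hk))⟩

lemma sem_eventually_lt {u : ℕ → X} {x : X} (hu : Tendsto u atTop (𝓝 x))
    (q : Seminorm ℝ X) (hq : Continuous ⇑q) {ε : ℝ} (hε : 0 < ε) :
    ∀ᶠ n in atTop, q (u n - x) < ε := by
  have : Tendsto (fun n => q (u n - x)) atTop (𝓝 (q (x - x))) :=
    (hq.tendsto _).comp (hu.sub_const x)
  simp only [sub_self, map_zero] at this
  exact (this.eventually (eventually_lt_nhds hε))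


lemma unif_cont_sem {g : ℝ → X} {a b : ℝ} (hg : ContinuousOn g (Icc a b))
    (q : Seminorm ℝ X) (hq : Continuous ⇑q) {ε : ℝ} (hε : 0 < ε) :
    ∃ δ : ℝ, 0 < δ ∧ ∀ s ∈ Icc a b, ∀ s' ∈ Icc a b, |s - s'| < δ → q (g s - g s') ≤ ε := by
  have huc : UniformContinuousOn g (Icc a b) :=
    isCompact_Icc.uniformContinuousOn_of_continuous hg
  have hent : {p : X × X | q (p.1 - p.2) < ε} ∈ 𝓤 X := by
    rw [uniformity_eq_comap_nhds_zero X, Filter.mem_comap]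
    refine ⟨{x | q x < ε}, ?_, ?_⟩
    · have : Continuous fun x : X => q x := hq
      have h0 : q (0:X) < ε := by simpa using hε
      exact (isOpen_lt hq continuous_const).mem_nhds h0
    · intro p hp
      simp only [mem_preimage, mem_setOf_eq] at hp ⊢
      have : p.1 - p.2 = -(p.2 - p.1) := (neg_sub _ _).symm
      rw [this, map_neg_eq_map]
      exact hp
  have hmem := Filter.mem_map.mp (huc hent)
  rw [Filter.mem_inf_iff_superset] at hmem
  rcases hmem with ⟨S, hS, P, hP, hsub⟩
  rcases (Filter.HasBasis.mem_iff (Metric.uniformity_basis_dist (α := ℝ))).mp hS with ⟨δ, hδ, hδsub⟩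
  refine ⟨δ, hδ, fun s hs s' hs' hd => ?_⟩
  have hmem2 : ((s, s') : ℝ × ℝ) ∈ (fun x : ℝ × ℝ => (g x.1, g x.2)) ⁻¹' {p : X × X | q (p.1 - p.2) < ε} := by
    refine hsub ⟨hδsub (by simpa [Real.dist_eq] using hd), ?_⟩
    rw [Filter.mem_principal] at hP
    exact hP ⟨hs, hs'⟩
  exact le_of_lt hmem2

end Sem
section Aux
open Filter Topology Set Uniformity
set_option linter.unusedSectionVars false

namespace IntervalPartition

variable {a b : ℝ} (d : IntervalPartition a b)

lemma mono : ∀ {i j : ℕ}, i ≤ j → j ≤ d.n → d.points i ≤ d.points j := by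
  intro i j hij hj
  induction j with
  | zero => simp_all
  | succ k ih =>
    rcases Nat.eq_or_lt_of_le hij with rfl | hlt
    · exact le_rfl
    · exact le_trans (ih (Nat.lt_succ_iff.mp hlt) (le_trans (Nat.le_succ k) hj))
        (le_of_lt (d.increasing k (Nat.lt_of_succ_le hj)))

lemma a_le (i : ℕ) (hi : i ≤ d.n) : a ≤ d.points i := by
  have := d.mono (Nat.zero_le i) hi
  rwa [d.first_eq] at this

lemma le_b (i : ℕ) (hi : i ≤ d.n) : d.points i ≤ b := by
  have := d.mono hi (le_refl d.n)
  rwa [d.last_eq] at this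

lemma a_le_b (d : IntervalPartition a b) : a ≤ b := by
  have := d.a_le d.n le_rfl
  rwa [d.last_eq] at this

lemma tag_mem {c : ℕ → ℝ} (hc : ∀ i, i < d.n → c i ∈ Set.Icc (d.points i) (d.points (i + 1)))
    {i : ℕ} (hi : i < d.n) : c i ∈ Set.Icc a b :=
  ⟨le_trans (d.a_le i (le_of_lt hi)) (hc i hi).1,
   le_trans (hc i hi).2 (d.le_b (i+1) hi)⟩

end IntervalPartition

/-- partition of `[a,a]`. -/
def pointPartition (a : ℝ) : IntervalPartition a a :=
  ⟨0, fun _ => a, rfl, rfl, fun i hi => absurd hi (Nat.not_lt_zero i)⟩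

/-- uniform partition of `[a,b]`, `a < b`, into `n+1` pieces. -/
noncomputable def unifPartition (a b : ℝ) (hab : a < b) (n : ℕ) : IntervalPartition a b where
  n := n + 1
  points i := a + i * ((b - a) / (n + 1))
  first_eq := by simp
  last_eq := by field_simp; push_cast; ring
  increasing := by
    intro i _
    have hba : (0:ℝ) < b - a := by linarith
    have h1 : (0:ℝ) < (b - a) / (n + 1) := by positivity
    have : (i:ℝ) < (i:ℝ) + 1 := by linarith
    push_cast
    nlinarith

lemma unifPartition_mesh (a b : ℝ) (hab : a < b) (n : ℕ) (i : ℕ) :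
    (unifPartition a b hab n).points (i+1) - (unifPartition a b hab n).points i
      = (b - a) / (n + 1) := by
  simp only [unifPartition]
  push_cast
  ring

end Aux
section Aux2
open Filter Topology Set Uniformity
set_option linter.unusedSectionVars false
set_option maxHeartbeats 800000

variable {X Y : Type*}
variable [AddCommGroup X] [Module ℝ X] [UniformSpace X] [IsUniformAddGroup X] [ContinuousSMul ℝ X]
variable [AddCommGroup Y] [Module ℝ Y] [UniformSpace Y] [IsUniformAddGroup Y] [ContinuousSMul ℝ Y]

/-- Riemann sum. -/
noncomputable def RS {a b : ℝ} (d : IntervalPartition a b) (c : ℕ → ℝ) (g : ℝ → X) : X :=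
  ∑ i ∈ Finset.range d.n, (d.points (i + 1) - d.points i) • g (c i)

lemma isRiemannIntegral_iff_RS {g : ℝ → X} {a b : ℝ} {y : X} :
    IsRiemannIntegral g a b y ↔
    ∀ q : Seminorm ℝ X, Continuous ⇑q → ∀ ε : ℝ, 0 < ε → ∃ δ : ℝ, 0 < δ ∧
    ∀ (d : IntervalPartition a b) (c : ℕ → ℝ),
      (∀ i, i < d.n → d.points (i + 1) - d.points i < δ) →
      (∀ i, i < d.n → c i ∈ Set.Icc (d.points i) (d.points (i + 1))) →
      q (RS d c g - y) < ε := Iff.rfl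

lemma seminorm_sum_le (q : Seminorm ℝ X) (s : Finset ℕ) (f : ℕ → X) :
    q (∑ i ∈ s, f i) ≤ ∑ i ∈ s, q (f i) :=
  Finset.le_sum_of_subadditive ⇑q (map_zero q).le (fun x y => map_add_le_add q x y) s f

lemma partition_self_n_eq_zero {a : ℝ} (d : IntervalPartition a a) : d.n = 0 := by
  by_contra h
  have h0 : 0 < d.n := Nat.pos_of_ne_zero h
  have := d.increasing 0 h0
  have h2 := d.mono (i := 1) (j := d.n) h0 le_rfl
  rw [d.first_eq, d.last_eq] at *
  linarith

lemma isRiemannIntegral_point (g : ℝ → X) (a : ℝ) : IsRiemannIntegral g a a 0 := by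
  intro q hq ε hε
  refine ⟨1, one_pos, fun d c _ _ => ?_⟩
  have h0 := partition_self_n_eq_zero d
  simp [h0, hε]

/-- existence of fine tagged partitions -/
lemma exists_fine (a b : ℝ) (hab : a ≤ b) {δ : ℝ} (hδ : 0 < δ) :
    ∃ (d : IntervalPartition a b) (c : ℕ → ℝ),
      (∀ i, i < d.n → d.points (i + 1) - d.points i < δ) ∧
      (∀ i, i < d.n → c i ∈ Set.Icc (d.points i) (d.points (i + 1))) := by
  rcases eq_or_lt_of_le hab with rfl | hlt
  · exact ⟨pointPartition a, fun _ => a, by intro i hi; exact absurd hi (Nat.not_lt_zero i),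
      by intro i hi; exact absurd hi (Nat.not_lt_zero i)⟩
  · obtain ⟨n, hn⟩ := exists_nat_gt ((b - a) / δ)
    refine ⟨unifPartition a b hlt n, fun i => (unifPartition a b hlt n).points i, ?_, ?_⟩
    · intro i hi
      rw [unifPartition_mesh]
      have hba : 0 < b - a := by linarith
      have hn0 : (0:ℝ) < n + 1 := by positivity
      rw [div_lt_iff₀ hn0]
      rw [div_lt_iff₀ hδ] at hn
      nlinarith
    · intro i hi
      constructor
      · exact le_rfl
      · exact le_of_lt ((unifPartition a b hlt n).increasing i hi)

lemma isRiemannIntegral_unique [LocallyConvexSpace ℝ X] [T2Space X]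
    {g : ℝ → X} {a b : ℝ} (hab : a ≤ b) {y y' : X}
    (h : IsRiemannIntegral g a b y) (h' : IsRiemannIntegral g a b y') : y = y' := by
  have : y - y' = 0 := by
    apply eq_zero_of_sem
    intro q hq ε hε
    rcases h q hq (ε/2) (by linarith) with ⟨δ₁, hδ₁, H₁⟩
    rcases h' q hq (ε/2) (by linarith) with ⟨δ₂, hδ₂, H₂⟩
    rcases exists_fine a b hab (lt_min hδ₁ hδ₂) with ⟨d, c, hmesh, htag⟩
    have e₁ : q (RS d c g - y) < ε/2 := H₁ d c (fun i hi => lt_of_lt_of_le (hmesh i hi) (min_le_left _ _)) htag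
    have e₂ : q (RS d c g - y') < ε/2 := H₂ d c (fun i hi => lt_of_lt_of_le (hmesh i hi) (min_le_right _ _)) htag
    calc q (y - y') = q ((RS d c g - y') - (RS d c g - y)) := by
          congr 1; abel
      _ ≤ q (RS d c g - y') + q (RS d c g - y) := by
          rw [sub_eq_add_neg]
          refine le_trans (map_add_le_add q _ _) ?_
          rw [map_neg_eq_map]
      _ < ε := by linarith
  exact sub_eq_zero.mp this

lemma isRiemannIntegral_congr {g g' : ℝ → X} {a b : ℝ} {y : X}
    (hgg' : ∀ s ∈ Icc a b, g s = g' s) (h : IsRiemannIntegral g a b y) :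
    IsRiemannIntegral g' a b y := by
  intro q hq ε hε
  rcases h q hq ε hε with ⟨δ, hδ, H⟩
  refine ⟨δ, hδ, fun d c hmesh htag => ?_⟩
  have : RS d c g' = RS d c g := by
    unfold RS
    refine Finset.sum_congr rfl fun i hi => ?_
    rw [hgg' _ (d.tag_mem htag (Finset.mem_range.mp hi))]
  rw [show (∑ i ∈ Finset.range d.n,
      (d.points (i + 1) - d.points i) • g' (c i)) = RS d c g' from rfl, this]
  exact H d c hmesh htag

lemma isRiemannIntegral_zero {g : ℝ → X} {a b : ℝ}
    (hg : ∀ s ∈ Icc a b, g s = 0) : IsRiemannIntegral g a b 0 := by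
  intro q hq ε hε
  refine ⟨1, one_pos, fun d c hmesh htag => ?_⟩
  have : RS d c g = 0 := by
    unfold RS
    refine Finset.sum_eq_zero fun i hi => ?_
    rw [hg _ (d.tag_mem htag (Finset.mem_range.mp hi)), smul_zero]
  rw [show (∑ i ∈ Finset.range d.n,
      (d.points (i + 1) - d.points i) • g (c i)) = RS d c g from rfl, this]
  simpa using hε

lemma isRiemannIntegral_sub {g g' : ℝ → X} {a b : ℝ} {y y' : X}
    (h : IsRiemannIntegral g a b y) (h' : IsRiemannIntegral g' a b y') :
    IsRiemannIntegral (fun s => g s - g' s) a b (y - y') := by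
  intro q hq ε hε
  rcases h q hq (ε/2) (by linarith) with ⟨δ₁, hδ₁, H₁⟩
  rcases h' q hq (ε/2) (by linarith) with ⟨δ₂, hδ₂, H₂⟩
  refine ⟨min δ₁ δ₂, lt_min hδ₁ hδ₂, fun d c hmesh htag => ?_⟩
  have e₁ : q (RS d c g - y) < ε/2 := H₁ d c (fun i hi => lt_of_lt_of_le (hmesh i hi) (min_le_left _ _)) htag
  have e₂ : q (RS d c g' - y') < ε/2 := H₂ d c (fun i hi => lt_of_lt_of_le (hmesh i hi) (min_le_right _ _)) htag
  have hsum : (∑ i ∈ Finset.range d.n,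
      (d.points (i + 1) - d.points i) • (g (c i) - g' (c i))) - (y - y')
      = (RS d c g - y) - (RS d c g' - y') := by
    unfold RS
    simp only [smul_sub]
    rw [Finset.sum_sub_distrib]
    abel
  rw [hsum]
  calc q ((RS d c g - y) - (RS d c g' - y'))
      ≤ q (RS d c g - y) + q (RS d c g' - y') := by
        rw [sub_eq_add_neg]
        refine le_trans (map_add_le_add q _ _) ?_
        rw [map_neg_eq_map]
    _ < ε := by linarith

lemma isRiemannIntegral_add {g g' : ℝ → X} {a b : ℝ} {y y' : X}
    (h : IsRiemannIntegral g a b y) (h' : IsRiemannIntegral g' a b y') :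
    IsRiemannIntegral (fun s => g s + g' s) a b (y + y') := by
  have := isRiemannIntegral_sub h (isRiemannIntegral_sub (isRiemannIntegral_zero
    (g := fun _ => (0:X)) (a := a) (b := b) (fun _ _ => rfl)) h')
  simpa [sub_sub_cancel, zero_sub, sub_neg_eq_add] using this

lemma isRiemannIntegral_map (L : X →L[ℝ] Y) {g : ℝ → X} {a b : ℝ} {y : X}
    (h : IsRiemannIntegral g a b y) :
    IsRiemannIntegral (fun s => L (g s)) a b (L y) := by
  intro q hq ε hε
  have hcomp : Continuous ⇑(q.comp (L : X →ₗ[ℝ] Y)) := by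
    have : ⇑(q.comp (L : X →ₗ[ℝ] Y)) = ⇑q ∘ ⇑L := rfl
    rw [this]
    exact hq.comp L.continuous
  rcases h (q.comp (L : X →ₗ[ℝ] Y)) hcomp ε hε with ⟨δ, hδ, H⟩
  refine ⟨δ, hδ, fun d c hmesh htag => ?_⟩
  have e := H d c hmesh htag
  have : (∑ i ∈ Finset.range d.n, (d.points (i + 1) - d.points i) • L (g (c i))) - L y
      = L (RS d c g - y) := by
    unfold RS
    rw [map_sub, map_sum]
    simp only [map_smul]
  rw [this]
  exact e

end Aux2
section Aux3
open Filter Topology Set Uniformity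
set_option linter.unusedSectionVars false
set_option maxHeartbeats 1000000

variable {X Y : Type*}
variable [AddCommGroup X] [Module ℝ X] [UniformSpace X] [IsUniformAddGroup X] [ContinuousSMul ℝ X]
variable [AddCommGroup Y] [Module ℝ Y] [UniformSpace Y] [IsUniformAddGroup Y] [ContinuousSMul ℝ Y]

/-- translate a partition -/
def IntervalPartition.shift {a b : ℝ} (d : IntervalPartition a b) (h : ℝ) : IntervalPartition (a + h) (b + h) where
  n := d.n
  points i := d.points i + h
  first_eq := by show d.points 0 + h = a + h; rw [d.first_eq]
  last_eq := by show d.points d.n + h = b + h; rw [d.last_eq]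
  increasing := fun i hi => by
    have := d.increasing i hi
    show d.points i + h < d.points (i + 1) + h
    linarith

lemma isRiemannIntegral_shift {g : ℝ → X} {a b h : ℝ} {y : X}
    (hg : IsRiemannIntegral g a b y) :
    IsRiemannIntegral (fun s => g (s - h)) (a + h) (b + h) y := by
  intro q hq ε hε
  rcases hg q hq ε hε with ⟨δ, hδ, H⟩
  refine ⟨δ, hδ, fun d c hmesh htag => ?_⟩
  -- build partition of [a,b] by shifting back
  set d₀ : IntervalPartition a b :=
    ⟨d.n, fun i => d.points i - h,
     by show d.points 0 - h = a; rw [d.first_eq]; ring,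
     by show d.points d.n - h = b; rw [d.last_eq]; ring,
     fun i hi => by
       have := d.increasing i hi
       show d.points i - h < d.points (i + 1) - h
       linarith⟩ with hd₀
  have e := H d₀ (fun i => c i - h)
    (by intro i hi; simp only [hd₀]; have := hmesh i hi; simp at this ⊢; linarith)
    (by intro i hi
        have := htag i hi
        simp only [hd₀, Set.mem_Icc] at this ⊢
        constructor <;> linarith [this.1, this.2])
  have hRS : RS d c (fun s => g (s - h)) = RS d₀ (fun i => c i - h) g := by
    unfold RS
    refine Finset.sum_congr rfl fun i hi => ?_
    simp only [hd₀]
    ring_nf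
  calc q ((∑ i ∈ Finset.range d.n,
        (d.points (i + 1) - d.points i) • g (c i - h)) - y)
      = q (RS d₀ (fun i => c i - h) g - y) := by rw [← hRS]; rfl
    _ < ε := e

/-- reflected partition -/
def IntervalPartition.reflect {a b : ℝ} (d : IntervalPartition a b) : IntervalPartition a b where
  n := d.n
  points i := a + b - d.points (d.n - i)
  first_eq := by show a + b - d.points (d.n - 0) = a; rw [Nat.sub_zero, d.last_eq]; ring
  last_eq := by show a + b - d.points (d.n - d.n) = b; rw [Nat.sub_self, d.first_eq]; ring
  increasing := fun i hi => by
    have h1 : d.n - (i + 1) < d.n := by omega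
    have h2 : d.n - i = (d.n - (i+1)) + 1 := by omega
    have := d.increasing (d.n - (i+1)) h1
    show a + b - d.points (d.n - i) < a + b - d.points (d.n - (i + 1))
    rw [h2]
    linarith

lemma isRiemannIntegral_reflect {g : ℝ → X} {a b : ℝ} {y : X}
    (hg : IsRiemannIntegral g a b y) :
    IsRiemannIntegral (fun s => g (a + b - s)) a b y := by
  intro q hq ε hε
  rcases hg q hq ε hε with ⟨δ, hδ, H⟩
  refine ⟨δ, hδ, fun d c hmesh htag => ?_⟩
  set d₀ := d.reflect with hd₀
  set c₀ : ℕ → ℝ := fun i => a + b - c (d.n - 1 - i) with hc₀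
  have hidx : ∀ i, i < d.n → (d.n - (d.n - 1 - i) = i + 1 ∧ d.n - (d.n - 1 - i + 1) = i) := by
    intro i hi; omega
  have e := H d₀ c₀ ?_ ?_
  · have hRS : RS d₀ c₀ g = RS d c (fun s => g (a + b - s)) := by
      unfold RS
      show ∑ i ∈ Finset.range d.n, _ = ∑ i ∈ Finset.range d.n, _
      rw [← Finset.sum_range_reflect]
      refine Finset.sum_congr rfl fun i hi => ?_
      rw [Finset.mem_range] at hi
      obtain ⟨h1, h2⟩ := hidx i hi
      simp only [hd₀, IntervalPartition.reflect, hc₀, h1, h2]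
      have h3 : d.n - 1 - (d.n - 1 - i) = i := by omega
      rw [h3]
      congr 1
      ring
    calc q ((∑ i ∈ Finset.range d.n,
          (d.points (i + 1) - d.points i) • g (a + b - c i)) - y)
        = q (RS d₀ c₀ g - y) := by rw [hRS]; rfl
      _ < ε := e
  · intro i hi
    simp only [hd₀, IntervalPartition.reflect] at hi ⊢
    have h2 : d.n - i = (d.n - (i+1)) + 1 := by omega
    have := hmesh (d.n - (i+1)) (by omega)
    rw [h2]
    linarith
  · intro i hi
    simp only [hd₀, IntervalPartition.reflect, hc₀] at hi ⊢
    have h2 : d.n - i = (d.n - (i+1)) + 1 := by omega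
    have h3 : d.n - 1 - i = d.n - (i+1) := by omega
    have := htag (d.n - (i+1)) (by omega)
    rw [Set.mem_Icc] at this ⊢
    rw [h2, h3]
    constructor <;> linarith [this.1, this.2]

end Aux3
section Aux4
open Filter Topology Set Uniformity
set_option linter.unusedSectionVars false
set_option maxHeartbeats 1000000

variable {X : Type*}
variable [AddCommGroup X] [Module ℝ X] [UniformSpace X] [IsUniformAddGroup X] [ContinuousSMul ℝ X]

private lemma clamp_step {p₁ p₂ u v : ℝ} (h12 : p₁ ≤ p₂) (huv : u ≤ v) :
    max p₁ (min p₂ v) - max p₁ (min p₂ u) = max 0 (min p₂ v - max p₁ u) := by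
  rcases le_total v p₁ with h | h <;> rcases le_total p₂ u with h' | h' <;>
    simp [min_def, max_def] <;> split_ifs <;> linarith

lemma cell_sum {a b : ℝ} (e : IntervalPartition a b) {p₁ p₂ : ℝ}
    (h1 : a ≤ p₁) (h12 : p₁ ≤ p₂) (h2 : p₂ ≤ b) :
    ∑ j ∈ Finset.range e.n,
      max 0 (min p₂ (e.points (j+1)) - max p₁ (e.points j)) = p₂ - p₁ := by
  have : ∀ j ∈ Finset.range e.n,
      max 0 (min p₂ (e.points (j+1)) - max p₁ (e.points j))
        = max p₁ (min p₂ (e.points (j+1))) - max p₁ (min p₂ (e.points j)) := by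
    intro j hj
    rw [Finset.mem_range] at hj
    exact (clamp_step h12 (le_of_lt (e.increasing j hj))).symm
  rw [Finset.sum_congr rfl this, Finset.sum_range_sub (fun j => max p₁ (min p₂ (e.points j)))]
  rw [e.last_eq, e.first_eq]
  rw [min_eq_left h2, max_eq_right h12, min_eq_right (le_trans h1 h12), max_eq_left h1]

lemma sum_mesh {a b : ℝ} (d : IntervalPartition a b) :
    ∑ i ∈ Finset.range d.n, (d.points (i+1) - d.points i) = b - a := by
  rw [Finset.sum_range_sub d.points, d.last_eq, d.first_eq]

lemma two_sum (q : Seminorm ℝ X) {g : ℝ → X} {a b : ℝ} {ε δ : ℝ} (hε : 0 ≤ ε)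
    (hosc : ∀ s ∈ Icc a b, ∀ s' ∈ Icc a b, |s - s'| < δ → q (g s - g s') ≤ ε)
    (d e : IntervalPartition a b) (c k : ℕ → ℝ)
    (hc : ∀ i, i < d.n → c i ∈ Set.Icc (d.points i) (d.points (i + 1)))
    (hk : ∀ j, j < e.n → k j ∈ Set.Icc (e.points j) (e.points (j + 1)))
    (hd : ∀ i, i < d.n → d.points (i+1) - d.points i < δ/2)
    (he : ∀ j, j < e.n → e.points (j+1) - e.points j < δ/2) :
    q (RS d c g - RS e k g) ≤ (b - a) * ε := by
  set L : ℕ → ℕ → ℝ := fun i j =>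
    max 0 (min (d.points (i+1)) (e.points (j+1)) - max (d.points i) (e.points j)) with hL
  have hRSd : RS d c g = ∑ i ∈ Finset.range d.n, ∑ j ∈ Finset.range e.n, L i j • g (c i) := by
    unfold RS
    refine Finset.sum_congr rfl fun i hi => ?_
    rw [Finset.mem_range] at hi
    rw [← Finset.sum_smul]
    congr 1
    rw [cell_sum e (d.a_le i (le_of_lt hi)) (le_of_lt (d.increasing i hi)) (d.le_b (i+1) hi)]
  have hRSe : RS e k g = ∑ i ∈ Finset.range d.n, ∑ j ∈ Finset.range e.n, L i j • g (k j) := by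
    unfold RS
    rw [Finset.sum_comm]
    refine Finset.sum_congr rfl fun j hj => ?_
    rw [Finset.mem_range] at hj
    rw [← Finset.sum_smul]
    congr 1
    have := cell_sum d (e.a_le j (le_of_lt hj)) (le_of_lt (e.increasing j hj)) (e.le_b (j+1) hj)
    rw [← this]
    refine Finset.sum_congr rfl fun i _ => ?_
    simp only [hL]
    rw [min_comm (e.points (j+1)) (d.points (i+1)), max_comm (e.points j) (d.points i)]
  have hdiff : RS d c g - RS e k g
      = ∑ i ∈ Finset.range d.n, ∑ j ∈ Finset.range e.n, L i j • (g (c i) - g (k j)) := by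
    rw [hRSd, hRSe, ← Finset.sum_sub_distrib]
    refine Finset.sum_congr rfl fun i _ => ?_
    rw [← Finset.sum_sub_distrib]
    refine Finset.sum_congr rfl fun j _ => ?_
    rw [smul_sub]
  rw [hdiff]
  have hbound : ∀ i ∈ Finset.range d.n, ∀ j ∈ Finset.range e.n,
      q (L i j • (g (c i) - g (k j))) ≤ L i j * ε := by
    intro i hi j hj
    rw [Finset.mem_range] at hi hj
    rw [map_smul_eq_mul]
    have hL0 : 0 ≤ L i j := le_max_left _ _
    rw [Real.norm_eq_abs, abs_of_nonneg hL0]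
    rcases eq_or_lt_of_le hL0 with hz | hpos
    · rw [← hz]; simp
    · refine mul_le_mul_of_nonneg_left ?_ hL0
      have hov : max (d.points i) (e.points j) < min (d.points (i+1)) (e.points (j+1)) := by
        by_contra hcon
        push_neg at hcon
        have : L i j = 0 := max_eq_left (by linarith)
        rw [this] at hpos; exact lt_irrefl _ hpos
      have hci := hc i hi
      have hkj := hk j hj
      refine hosc _ (d.tag_mem hc hi) _ (e.tag_mem hk hj) ?_
      have h1 := hd i hi
      have h2 := he j hj
      rw [abs_lt]
      have l1 : d.points i ≤ max (d.points i) (e.points j) := le_max_left _ _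
      have l2 : e.points j ≤ max (d.points i) (e.points j) := le_max_right _ _
      have l3 : min (d.points (i+1)) (e.points (j+1)) ≤ d.points (i+1) := min_le_left _ _
      have l4 : min (d.points (i+1)) (e.points (j+1)) ≤ e.points (j+1) := min_le_right _ _
      constructor <;> [nlinarith [hci.1, hci.2, hkj.1, hkj.2]; nlinarith [hci.1, hci.2, hkj.1, hkj.2]]
  calc q (∑ i ∈ Finset.range d.n, ∑ j ∈ Finset.range e.n, L i j • (g (c i) - g (k j)))
      ≤ ∑ i ∈ Finset.range d.n, q (∑ j ∈ Finset.range e.n, L i j • (g (c i) - g (k j))) :=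
        seminorm_sum_le q _ _
    _ ≤ ∑ i ∈ Finset.range d.n, ∑ j ∈ Finset.range e.n, q (L i j • (g (c i) - g (k j))) := by
        refine Finset.sum_le_sum fun i _ => seminorm_sum_le q _ _
    _ ≤ ∑ i ∈ Finset.range d.n, ∑ j ∈ Finset.range e.n, L i j * ε := by
        refine Finset.sum_le_sum fun i hi => Finset.sum_le_sum fun j hj => hbound i hi j hj
    _ = (∑ i ∈ Finset.range d.n, ∑ j ∈ Finset.range e.n, L i j) * ε := by
        rw [Finset.sum_mul]
        exact Finset.sum_congr rfl fun i _ => (Finset.sum_mul _ _ _).symm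
    _ = (b - a) * ε := by
        congr 1
        rw [← sum_mesh d]
        refine Finset.sum_congr rfl fun i hi => ?_
        rw [Finset.mem_range] at hi
        exact cell_sum e (d.a_le i (le_of_lt hi)) (le_of_lt (d.increasing i hi)) (d.le_b (i+1) hi)
end Aux4
section Aux5
open Filter Topology Set Uniformity
set_option linter.unusedSectionVars false
set_option maxHeartbeats 1000000

variable {X : Type*}
variable [AddCommGroup X] [Module ℝ X] [UniformSpace X] [IsUniformAddGroup X] [ContinuousSMul ℝ X]
variable [LocallyConvexSpace ℝ X]

lemma riemann_exists [CompleteSpace X] {g : ℝ → X} {a b : ℝ} (hab : a ≤ b)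
    (hg : ContinuousOn g (Icc a b)) : ∃ y, IsRiemannIntegral g a b y := by
  rcases eq_or_lt_of_le hab with rfl | hlt
  · exact ⟨0, isRiemannIntegral_point g a⟩
  have hba : 0 < b - a := by linarith
  set u : ℕ → X := fun n => RS (unifPartition a b hlt n) (unifPartition a b hlt n).points g
    with hu
  have htagu : ∀ n, ∀ i, i < (unifPartition a b hlt n).n →
      (unifPartition a b hlt n).points i ∈
        Set.Icc ((unifPartition a b hlt n).points i) ((unifPartition a b hlt n).points (i+1)) :=
    fun n i hi => ⟨le_rfl, le_of_lt ((unifPartition a b hlt n).increasing i hi)⟩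
  have hmeshu : ∀ n i, (unifPartition a b hlt n).points (i+1) -
      (unifPartition a b hlt n).points i = (b - a)/(n+1) := fun n i => unifPartition_mesh a b hlt n i
  have hmesh_small : ∀ δ : ℝ, 0 < δ → ∃ N : ℕ, ∀ n ≥ N, (b - a)/(n+1) < δ := by
    intro δ hδ
    obtain ⟨N, hN⟩ := exists_nat_gt ((b - a) / δ)
    refine ⟨N, fun n hn => ?_⟩
    have h1 : (0:ℝ) < n + 1 := by positivity
    rw [div_lt_iff₀ h1]
    rw [div_lt_iff₀ hδ] at hN
    have : (N:ℝ) ≤ n := Nat.cast_le.mpr hn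
    nlinarith
  -- Cauchy
  have hcauchy : CauchySeq u := by
    apply cauchySeq_of_sem
    intro q hq ε hε
    rcases unif_cont_sem hg q hq (ε := ε / (2 * (b - a))) (by positivity) with ⟨δ, hδ, hosc⟩
    obtain ⟨N, hN⟩ := hmesh_small (δ/2) (by linarith)
    refine ⟨N, fun m hm n hn => ?_⟩
    have h2 := two_sum q (le_of_lt (by positivity : (0:ℝ) < ε / (2 * (b - a)))) hosc
      (unifPartition a b hlt m) (unifPartition a b hlt n) _ _ (htagu m) (htagu n)
      (fun i hi => by rw [hmeshu m i]; exact hN m hm)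
      (fun j hj => by rw [hmeshu n j]; exact hN n hn)
    calc q (u m - u n) ≤ (b - a) * (ε / (2 * (b - a))) := h2
      _ = ε / 2 := by field_simp
      _ < ε := by linarith
  obtain ⟨y, hy⟩ := cauchySeq_tendsto_of_complete hcauchy
  refine ⟨y, ?_⟩
  intro q hq ε hε
  rcases unif_cont_sem hg q hq (ε := ε / (3 * (b - a))) (by positivity) with ⟨δ, hδ, hosc⟩
  refine ⟨δ/2, by linarith, fun d c hmesh htag => ?_⟩
  obtain ⟨N, hN⟩ := hmesh_small (δ/2) (by linarith)
  have hev := sem_eventually_lt hy q hq (show (0:ℝ) < ε/3 by linarith)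
  rcases (hev.and (eventually_ge_atTop N)).exists with ⟨n, hn1, hn2⟩
  have h2 := two_sum q (le_of_lt (by positivity : (0:ℝ) < ε / (3 * (b - a)))) hosc
    d (unifPartition a b hlt n) c _ htag (htagu n)
    hmesh
    (fun j hj => by rw [hmeshu n j]; exact hN n hn2)
  have hq3 : q (RS d c g - y) ≤ q (RS d c g - u n) + q (u n - y) := by
    calc q (RS d c g - y) = q ((RS d c g - u n) + (u n - y)) := by congr 1; abel
      _ ≤ _ := map_add_le_add q _ _
  have hfin : q (RS d c g - y) < ε := by
    have : (b - a) * (ε / (3 * (b - a))) = ε/3 := by field_simp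
    rw [this] at h2
    calc q (RS d c g - y) ≤ q (RS d c g - u n) + q (u n - y) := hq3
      _ < ε/3 + ε/3 := by exact add_lt_add_of_le_of_lt h2 hn1
      _ < ε := by linarith
  exact hfin

end Aux5
section Aux6
open Filter Topology Set Uniformity
set_option linter.unusedSectionVars false
set_option maxHeartbeats 1000000

variable {X Y : Type*}
variable [AddCommGroup X] [Module ℝ X] [UniformSpace X] [IsUniformAddGroup X] [ContinuousSMul ℝ X]
variable [AddCommGroup Y] [Module ℝ Y] [UniformSpace Y] [IsUniformAddGroup Y] [ContinuousSMul ℝ Y]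

/-- concatenation of partitions -/
def IntervalPartition.concat {a c b : ℝ} (d₁ : IntervalPartition a c) (d₂ : IntervalPartition c b) : IntervalPartition a b where
  n := d₁.n + d₂.n
  points i := if i < d₁.n then d₁.points i else d₂.points (i - d₁.n)
  first_eq := by
    by_cases h : 0 < d₁.n
    · simp [h, d₁.first_eq]
    · have h0 : d₁.n = 0 := by omega
      have : a = c := by
        have := d₁.first_eq; have h2 := d₁.last_eq; rw [h0] at h2; rw [← this, h2]
      simp [h0, d₂.first_eq, this]
  last_eq := by
    have h : ¬ (d₁.n + d₂.n < d₁.n) := by omega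
    simp only [h, if_false]
    rw [Nat.add_sub_cancel_left, d₂.last_eq]
  increasing := by
    intro i hi
    by_cases h1 : i + 1 < d₁.n
    · have h0 : i < d₁.n := by omega
      simp only [h0, h1, if_true]
      exact d₁.increasing i h0
    · by_cases h0 : i < d₁.n
      · -- i + 1 = d₁.n
        have he : i + 1 = d₁.n := by omega
        simp only [h0, h1, if_true, if_false]
        have : d₂.points (i + 1 - d₁.n) = c := by rw [he, Nat.sub_self, d₂.first_eq]
        rw [this]
        have h3 := d₁.increasing i h0
        have h4 : d₁.points (i+1) = c := by rw [he, d₁.last_eq]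
        linarith
      · simp only [h0, h1, if_false]
        have h2 : i + 1 - d₁.n = (i - d₁.n) + 1 := by omega
        rw [h2]
        exact d₂.increasing (i - d₁.n) (by omega)

lemma isRiemannIntegral_concat_eq [LocallyConvexSpace ℝ X] [T2Space X]
    {g : ℝ → X} {a c b : ℝ} (hac : a ≤ c) (hcb : c ≤ b) {y₁ y₂ y : X}
    (h₁ : IsRiemannIntegral g a c y₁) (h₂ : IsRiemannIntegral g c b y₂)
    (h : IsRiemannIntegral g a b y) : y = y₁ + y₂ := by
  have : y - (y₁ + y₂) = 0 := by
    apply eq_zero_of_sem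
    intro q hq ε hε
    rcases h₁ q hq (ε/3) (by linarith) with ⟨δ₁, hδ₁, H₁⟩
    rcases h₂ q hq (ε/3) (by linarith) with ⟨δ₂, hδ₂, H₂⟩
    rcases h q hq (ε/3) (by linarith) with ⟨δ, hδ, H⟩
    set δm := min δ (min δ₁ δ₂) with hδm
    have hδm0 : 0 < δm := by
      apply lt_min hδ (lt_min hδ₁ hδ₂)
    rcases exists_fine a c hac hδm0 with ⟨d₁, c₁, hm₁, ht₁⟩
    rcases exists_fine c b hcb hδm0 with ⟨d₂, c₂, hm₂, ht₂⟩
    set d := d₁.concat d₂ with hd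
    set cc : ℕ → ℝ := fun i => if i < d₁.n then c₁ i else c₂ (i - d₁.n) with hcc
    have hpoints_lt : ∀ i, i < d₁.n → d.points i = d₁.points i := by
      intro i hi; simp [hd, IntervalPartition.concat, hi]
    have hpoints_ge : ∀ i, d₁.n ≤ i → d.points i = d₂.points (i - d₁.n) := by
      intro i hi
      have : ¬ (i < d₁.n) := by omega
      simp [hd, IntervalPartition.concat, this]
    have hpoint_join : d₁.points d₁.n = c := d₁.last_eq
    have hpoint_join2 : d₂.points 0 = c := d₂.first_eq
    -- points (i+1) for i < d₁.n equals d₁.points (i+1)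
    have hpoints_succ : ∀ i, i < d₁.n → d.points (i+1) = d₁.points (i+1) := by
      intro i hi
      by_cases h1 : i + 1 < d₁.n
      · exact hpoints_lt _ h1
      · have he : i + 1 = d₁.n := by omega
        rw [hpoints_ge _ (by omega), he, Nat.sub_self, hpoint_join2]
        exact hpoint_join.symm
    have hmesh : ∀ i, i < d.n → d.points (i+1) - d.points i < δm := by
      intro i hi
      by_cases h0 : i < d₁.n
      · rw [hpoints_succ i h0, hpoints_lt i h0]; exact hm₁ i h0
      · have hn : d₁.n ≤ i := by omega
        rw [hpoints_ge (i+1) (by omega), hpoints_ge i hn]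
        have h2 : i + 1 - d₁.n = (i - d₁.n) + 1 := by omega
        rw [h2]
        refine hm₂ _ ?_
        have : d.n = d₁.n + d₂.n := rfl
        omega
    have htags : ∀ i, i < d.n → cc i ∈ Set.Icc (d.points i) (d.points (i+1)) := by
      intro i hi
      by_cases h0 : i < d₁.n
      · rw [hpoints_succ i h0, hpoints_lt i h0]
        simp only [hcc, h0, if_true]
        exact ht₁ i h0
      · have hn : d₁.n ≤ i := by omega
        rw [hpoints_ge (i+1) (by omega), hpoints_ge i hn]
        have h2 : i + 1 - d₁.n = (i - d₁.n) + 1 := by omega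
        rw [h2]
        simp only [hcc, h0, if_false]
        refine ht₂ _ ?_
        have : d.n = d₁.n + d₂.n := rfl
        omega
    have hRSsplit : RS d cc g = RS d₁ c₁ g + RS d₂ c₂ g := by
      unfold RS
      have hdn : d.n = d₁.n + d₂.n := rfl
      rw [hdn, ← Finset.sum_range_add_sum_Ico _ (Nat.le_add_right d₁.n d₂.n)]
      congr 1
      · refine Finset.sum_congr rfl fun i hi => ?_
        rw [Finset.mem_range] at hi
        rw [hpoints_succ i hi, hpoints_lt i hi]
        simp only [hcc, hi, if_true]
      · rw [Finset.sum_Ico_eq_sum_range]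
        rw [Nat.add_sub_cancel_left]
        refine Finset.sum_congr rfl fun i hi => ?_
        rw [Finset.mem_range] at hi
        have e1 : d.points (d₁.n + i + 1) = d₂.points (i+1) := by
          rw [hpoints_ge _ (by omega)]
          congr 1
          omega
        have e2 : d.points (d₁.n + i) = d₂.points i := by
          rw [hpoints_ge _ (by omega)]
          congr 1
          omega
        have e3 : cc (d₁.n + i) = c₂ i := by
          have : ¬ (d₁.n + i < d₁.n) := by omega
          simp only [hcc, this, if_false]
          congr 1
          omega
        rw [e1, e2, e3]
    have e := H d cc (fun i hi => lt_of_lt_of_le (hmesh i hi) (le_trans (min_le_left _ _) le_rfl)) htags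
    have e₁ := H₁ d₁ c₁ (fun i hi => lt_of_lt_of_le (hm₁ i hi)
      (le_trans (min_le_right _ _) (min_le_left _ _))) ht₁
    have e₂ := H₂ d₂ c₂ (fun i hi => lt_of_lt_of_le (hm₂ i hi)
      (le_trans (min_le_right _ _) (min_le_right _ _))) ht₂
    have e' : q (RS d cc g - y) < ε/3 := e
    have e₁' : q (RS d₁ c₁ g - y₁) < ε/3 := e₁
    have e₂' : q (RS d₂ c₂ g - y₂) < ε/3 := e₂
    have key : y - (y₁ + y₂) = (RS d₁ c₁ g - y₁) + (RS d₂ c₂ g - y₂) - (RS d cc g - y) := by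
      rw [hRSsplit]; abel
    rw [key]
    calc q ((RS d₁ c₁ g - y₁) + (RS d₂ c₂ g - y₂) - (RS d cc g - y))
        ≤ q ((RS d₁ c₁ g - y₁) + (RS d₂ c₂ g - y₂)) + q (RS d cc g - y) := by
          rw [sub_eq_add_neg]
          refine le_trans (map_add_le_add q _ _) ?_
          rw [map_neg_eq_map]
      _ ≤ q (RS d₁ c₁ g - y₁) + q (RS d₂ c₂ g - y₂) + q (RS d cc g - y) :=
          add_le_add_left (map_add_le_add q _ _) _
      _ < ε := by linarith
  have := sub_eq_zero.mp this
  exact this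

lemma isRiemannIntegral_mean_le {g : ℝ → X} {a b : ℝ} {y v : X} (hab : a ≤ b)
    (h : IsRiemannIntegral g a b y) (q : Seminorm ℝ X) (hq : Continuous ⇑q)
    {M : ℝ} (hM : 0 ≤ M) (hbd : ∀ s ∈ Icc a b, q (g s - v) ≤ M) :
    q (y - (b - a) • v) ≤ M * (b - a) := by
  refine le_of_forall_pos_le_add fun ε hε => ?_
  rcases h q hq ε hε with ⟨δ, hδ, H⟩
  rcases exists_fine a b hab hδ with ⟨d, c, hmesh, htag⟩
  have e : q (RS d c g - y) < ε := H d c hmesh htag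
  have hsplit : y - (b - a) • v = (RS d c g - (b-a) • v) - (RS d c g - y) := by abel
  have hRS : RS d c g - (b - a) • v
      = ∑ i ∈ Finset.range d.n, (d.points (i+1) - d.points i) • (g (c i) - v) := by
    unfold RS
    simp only [smul_sub]
    rw [Finset.sum_sub_distrib, ← Finset.sum_smul, sum_mesh d]
  have hq2 : q (RS d c g - (b - a) • v) ≤ M * (b - a) := by
    rw [hRS]
    refine le_trans (seminorm_sum_le q _ _) ?_
    have : ∀ i ∈ Finset.range d.n,
        q ((d.points (i+1) - d.points i) • (g (c i) - v))
          ≤ (d.points (i+1) - d.points i) * M := by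
      intro i hi
      rw [Finset.mem_range] at hi
      rw [map_smul_eq_mul, Real.norm_eq_abs,
        abs_of_nonneg (le_of_lt (sub_pos.mpr (d.increasing i hi)))]
      exact mul_le_mul_of_nonneg_left (hbd _ (d.tag_mem htag hi))
        (le_of_lt (sub_pos.mpr (d.increasing i hi)))
    refine le_trans (Finset.sum_le_sum this) ?_
    rw [← Finset.sum_mul, sum_mesh d, mul_comm]
  calc q (y - (b - a) • v) = q ((RS d c g - (b-a) • v) - (RS d c g - y)) := by rw [hsplit]
    _ ≤ q (RS d c g - (b-a) • v) + q (RS d c g - y) := by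
        rw [sub_eq_add_neg]
        refine le_trans (map_add_le_add q _ _) ?_
        rw [map_neg_eq_map]
    _ ≤ M * (b - a) + ε := add_le_add hq2 (le_of_lt e)

lemma riemannIntegral_eq [LocallyConvexSpace ℝ X] [T2Space X]
    {g : ℝ → X} {a b : ℝ} (hab : a ≤ b) {y : X} (h : IsRiemannIntegral g a b y) :
    riemannIntegral g a b = y := by
  have hex : ∃ y, IsRiemannIntegral g a b y := ⟨y, h⟩
  rw [riemannIntegral, dif_pos hex]
  exact isRiemannIntegral_unique hab hex.choose_spec h

lemma riemannIntegral_congr {g g' : ℝ → X} {a b : ℝ}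
    (hgg' : ∀ s ∈ Icc a b, g s = g' s) :
    riemannIntegral g a b = riemannIntegral g' a b := by
  have hpred : IsRiemannIntegral g a b = IsRiemannIntegral g' a b := by
    funext y
    exact propext ⟨fun h => isRiemannIntegral_congr hgg' h,
      fun h => isRiemannIntegral_congr (fun s hs => (hgg' s hs).symm) h⟩
  unfold riemannIntegral
  rw [hpred]

lemma riemannIntegral_map_equiv [LocallyConvexSpace ℝ X] [T2Space X]
    [LocallyConvexSpace ℝ Y] [T2Space Y]
    (L : X ≃L[ℝ] Y) {g : ℝ → X} {a b : ℝ} (hab : a ≤ b) :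
    riemannIntegral (fun s => L (g s)) a b = L (riemannIntegral g a b) := by
  by_cases hex : ∃ y, IsRiemannIntegral g a b y
  · obtain ⟨y, hy⟩ := hex
    rw [riemannIntegral_eq hab hy]
    have : IsRiemannIntegral (fun s => (L : X →L[ℝ] Y) (g s)) a b ((L : X →L[ℝ] Y) y) :=
      isRiemannIntegral_map (L : X →L[ℝ] Y) hy
    exact riemannIntegral_eq hab this
  · have hex' : ¬ ∃ z, IsRiemannIntegral (fun s => L (g s)) a b z := by
      rintro ⟨z, hz⟩
      refine hex ⟨L.symm z, ?_⟩
      have := isRiemannIntegral_map (L.symm : Y →L[ℝ] X) hz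
      have heq : (fun s => (L.symm : Y →L[ℝ] X) (L (g s))) = g := by
        funext s; simp
      rw [heq] at this
      exact this
    simp only [riemannIntegral, dif_neg hex, dif_neg hex', map_zero]

end Aux6
section Aux7
open Filter Topology Set Uniformity
set_option linter.unusedSectionVars false
set_option maxHeartbeats 1000000

variable {X : Type*}
variable [AddCommGroup X] [Module ℝ X] [UniformSpace X] [IsUniformAddGroup X] [ContinuousSMul ℝ X]
variable [LocallyConvexSpace ℝ X]

lemma scqe_bound {T : ℝ → X →L[ℝ] X} (hT : IsSCQESemigroup T)
    (q : Seminorm ℝ X) (hq : Continuous ⇑q) {t₀ : ℝ} (ht₀ : 0 ≤ t₀) :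
    ∃ p : Seminorm ℝ X, Continuous ⇑p ∧ ∃ M : ℝ, 0 ≤ M ∧
      ∀ τ ∈ Icc (0:ℝ) t₀, ∀ x : X, q (T τ x) ≤ M * p x := by
  obtain ⟨ω, hω⟩ := hT.2.2.2
  obtain ⟨p, hp, C, hC, hbd⟩ := hω q hq
  refine ⟨p, hp, C * Real.exp (|ω| * t₀), by positivity, fun τ hτ x => ?_⟩
  have h1 := hbd τ hτ.1 x
  rw [map_smul_eq_mul, Real.norm_eq_abs, abs_of_pos (Real.exp_pos _)] at h1
  have hpos : (0:ℝ) < Real.exp (-ω * τ) := Real.exp_pos _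
  have hinv : (Real.exp (-ω * τ))⁻¹ = Real.exp (ω * τ) := by
    rw [show -ω * τ = -(ω * τ) by ring, Real.exp_neg, inv_inv]
  have h2 : q (T τ x) ≤ Real.exp (ω * τ) * (C * p x) := by
    calc q (T τ x) = (Real.exp (-ω * τ))⁻¹ * (Real.exp (-ω * τ) * q (T τ x)) := by
          field_simp
      _ ≤ (Real.exp (-ω * τ))⁻¹ * (C * p x) :=
          mul_le_mul_of_nonneg_left h1 (by positivity)
      _ = Real.exp (ω * τ) * (C * p x) := by rw [hinv]
  have h4 : Real.exp (ω * τ) ≤ Real.exp (|ω| * t₀) := by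
    apply Real.exp_le_exp.mpr
    calc ω * τ ≤ |ω * τ| := le_abs_self _
      _ = |ω| * |τ| := abs_mul _ _
      _ ≤ |ω| * t₀ := by
          refine mul_le_mul_of_nonneg_left ?_ (abs_nonneg ω)
          rw [abs_of_nonneg hτ.1]; exact hτ.2
  calc q (T τ x) ≤ Real.exp (ω * τ) * (C * p x) := h2
    _ ≤ Real.exp (|ω| * t₀) * (C * p x) :=
        mul_le_mul_of_nonneg_right h4 (by positivity)
    _ = C * Real.exp (|ω| * t₀) * p x := by ring

lemma conv_integrand_cont {T : ℝ → X →L[ℝ] X} (hT : IsSCQESemigroup T)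
    {f : ℝ → X} {t : ℝ} (ht : 0 ≤ t) (hf : ContinuousOn f (Icc 0 t)) :
    ContinuousOn (fun s => T (t - s) (f s)) (Icc 0 t) := by
  intro s₀ hs₀
  unfold ContinuousWithinAt
  apply tendsto_of_sem
  intro q hq ε hε
  obtain ⟨p, hp, M, hM, hbd⟩ := scqe_bound hT q hq ht
  -- term 2 : continuity of s ↦ T (t-s) (f s₀)
  have hcont2 : ContinuousWithinAt (fun s => T (t - s) (f s₀)) (Icc 0 t) s₀ := by
    have h1 : ContinuousOn (fun τ => T τ (f s₀)) (Ici (0:ℝ)) := hT.2.2.1 (f s₀)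
    have h2 : ContinuousOn (fun s : ℝ => t - s) (Icc 0 t) :=
      (continuous_const.sub continuous_id).continuousOn
    have hmap : MapsTo (fun s : ℝ => t - s) (Icc 0 t) (Ici 0) := by
      intro s hs; simp only [mem_Ici]; linarith [hs.2]
    exact (h1.comp h2 hmap) s₀ hs₀
  have hev2 : ∀ᶠ s in 𝓝[Icc 0 t] s₀, q (T (t - s) (f s₀) - T (t - s₀) (f s₀)) < ε/2 := by
    have : Tendsto (fun s => q (T (t - s) (f s₀) - T (t - s₀) (f s₀))) (𝓝[Icc 0 t] s₀)
        (𝓝 (q (T (t - s₀) (f s₀) - T (t - s₀) (f s₀)))) :=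
      (hq.tendsto _).comp (hcont2.sub tendsto_const_nhds)
    simp only [sub_self, map_zero] at this
    exact this.eventually (eventually_lt_nhds (by linarith : (0:ℝ) < ε/2))
  -- term 1
  have hev1 : ∀ᶠ s in 𝓝[Icc 0 t] s₀, p (f s - f s₀) < ε / (2 * (M + 1)) := by
    have hfc : ContinuousWithinAt f (Icc 0 t) s₀ := hf s₀ hs₀
    have : Tendsto (fun s => p (f s - f s₀)) (𝓝[Icc 0 t] s₀) (𝓝 (p (f s₀ - f s₀))) :=
      (hp.tendsto _).comp (hfc.sub tendsto_const_nhds)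
    simp only [sub_self, map_zero] at this
    exact this.eventually (eventually_lt_nhds (by positivity))
  have hmem : ∀ᶠ s in 𝓝[Icc 0 t] s₀, s ∈ Icc (0:ℝ) t := eventually_mem_nhdsWithin
  filter_upwards [hev1, hev2, hmem] with s h1 h2 hs
  have hsplit : T (t - s) (f s) - T (t - s₀) (f s₀)
      = T (t - s) (f s - f s₀) + (T (t - s) (f s₀) - T (t - s₀) (f s₀)) := by
    rw [map_sub]; abel
  have hb1 : q (T (t - s) (f s - f s₀)) ≤ M * p (f s - f s₀) :=
    hbd (t - s) ⟨by linarith [hs.2], by linarith [hs.1]⟩ _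
  calc q (T (t - s) (f s) - T (t - s₀) (f s₀))
      ≤ q (T (t - s) (f s - f s₀)) + q (T (t - s) (f s₀) - T (t - s₀) (f s₀)) := by
        rw [hsplit]; exact map_add_le_add q _ _
    _ < M * p (f s - f s₀) + ε/2 := by
        exact add_lt_add_of_le_of_lt hb1 h2
    _ ≤ M * (ε / (2 * (M + 1))) + ε/2 := by
        refine add_le_add_left (mul_le_mul_of_nonneg_left (le_of_lt h1) hM) _
    _ < ε := by
        have hM1 : 0 < M + 1 := by linarith
        have h2M : (0:ℝ) < 2*(M+1) := by linarith
        have hkey : M * (ε / (2 * (M + 1))) < ε/2 := by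
          rw [mul_div_assoc', div_lt_div_iff₀ h2M two_pos]
          nlinarith
        linarith

lemma zero_mem_genDomain (T : ℝ → X →L[ℝ] X) : (0:X) ∈ genDomain T := by
  refine ⟨0, ?_⟩
  have : (fun t : ℝ => t⁻¹ • (T t 0 - 0)) = fun _ => (0:X) := by
    funext t; simp
  rw [this]
  exact tendsto_const_nhds

end Aux7
section Aux8
open Filter Topology Set Uniformity
set_option linter.unusedSectionVars false
set_option maxHeartbeats 1000000

variable {X : Type*}
variable [AddCommGroup X] [Module ℝ X] [UniformSpace X] [IsUniformAddGroup X] [ContinuousSMul ℝ X]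
variable [LocallyConvexSpace ℝ X] [T2Space X] [CompleteSpace X]

lemma int_sg_mem_genDomain {T : ℝ → X →L[ℝ] X} (hT : IsSCQESemigroup T)
    (z : X) {t : ℝ} (ht : 0 ≤ t) :
    riemannIntegral (fun σ => T σ z) 0 t ∈ genDomain T := by
  set G : ℝ → X := fun σ => T σ z with hG
  have hGc : ∀ A B : ℝ, 0 ≤ A → ContinuousOn G (Icc A B) := by
    intro A B hA
    exact (hT.2.2.1 z).mono (fun x hx => le_trans hA hx.1)
  have hW : ∀ τ : ℝ, 0 ≤ τ → IsRiemannIntegral G 0 τ (riemannIntegral G 0 τ) := by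
    intro τ hτ
    obtain ⟨y, hy⟩ := riemann_exists hτ (hGc 0 τ le_rfl)
    rw [riemannIntegral_eq hτ hy]
    exact hy
  set w : ℝ → X := fun τ => riemannIntegral G 0 τ with hw
  refine ⟨G t - G 0, ?_⟩
  apply tendsto_of_sem
  intro q hq ε hε
  -- continuity of G at t and 0 within Ici 0
  have hδ : ∀ τ₀ : ℝ, 0 ≤ τ₀ → ∃ δ : ℝ, 0 < δ ∧
      ∀ σ ∈ Ici (0:ℝ), |σ - τ₀| < δ → q (G σ - G τ₀) ≤ ε/3 := by
    intro τ₀ hτ₀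
    have hc : ContinuousWithinAt G (Ici 0) τ₀ := hT.2.2.1 z τ₀ (mem_Ici.mpr hτ₀)
    have htd : Tendsto (fun σ => q (G σ - G τ₀)) (𝓝[Ici 0] τ₀) (𝓝 (q (G τ₀ - G τ₀))) :=
      (hq.tendsto _).comp (hc.sub tendsto_const_nhds)
    simp only [sub_self, map_zero] at htd
    have hev := htd.eventually (eventually_lt_nhds (by linarith : (0:ℝ) < ε/3))
    rw [eventually_iff, Metric.mem_nhdsWithin_iff] at hev
    rcases hev with ⟨δ, hδ0, hsub⟩
    refine ⟨δ, hδ0, fun σ hσ hd => ?_⟩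
    have : σ ∈ Metric.ball τ₀ δ ∩ Ici 0 := ⟨by rwa [Metric.mem_ball, Real.dist_eq], hσ⟩
    exact le_of_lt (hsub this)
  obtain ⟨δ₁, hδ₁0, hδ₁⟩ := hδ t ht
  obtain ⟨δ₂, hδ₂0, hδ₂⟩ := hδ 0 le_rfl
  have hIoo : Ioo (0:ℝ) (min δ₁ δ₂) ∈ 𝓝[>] (0:ℝ) :=
    Ioo_mem_nhdsGT_of_mem ⟨le_rfl, lt_min hδ₁0 hδ₂0⟩
  rw [eventually_iff]
  filter_upwards [hIoo] with h hh
  obtain ⟨hh0, hhm⟩ := hh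
  have hht : 0 ≤ t + h := by linarith
  -- R := integral over [t, t+h]
  obtain ⟨R, hR⟩ := riemann_exists (by linarith : t ≤ t + h) (hGc t (t+h) ht)
  -- T h (w t) as an integral over [h, t+h]
  have hTh : IsRiemannIntegral G h (t+h) (T h (w t)) := by
    have ha : IsRiemannIntegral (fun σ => T h (G σ)) 0 t (T h (w t)) :=
      isRiemannIntegral_map (T h) (hW t ht)
    have hb : IsRiemannIntegral (fun σ => G (σ + h)) 0 t (T h (w t)) := by
      refine isRiemannIntegral_congr (fun σ hσ => ?_) ha
      have hcomp := hT.2.1 h σ (le_of_lt hh0) hσ.1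
      show T h (G σ) = G (σ + h)
      simp only [hG]
      rw [show σ + h = h + σ by ring, hcomp]
      rfl
    have hc := isRiemannIntegral_shift (h := h) hb
    rw [zero_add] at hc
    refine isRiemannIntegral_congr (fun s _ => ?_) hc
    show G (s - h + h) = G s
    rw [sub_add_cancel]
  -- splitting identities
  have hsplit1 : w (t+h) = w t + R :=
    isRiemannIntegral_concat_eq ht (by linarith) (hW t ht) hR (hW (t+h) hht)
  have hsplit2 : w (t+h) = w h + T h (w t) :=
    isRiemannIntegral_concat_eq (le_of_lt hh0) (by linarith) (hW h (le_of_lt hh0)) hTh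
      (hW (t+h) hht)
  have hid : T h (w t) - w t = R - w h := by
    have : w t + R = w h + T h (w t) := by rw [← hsplit1, hsplit2]
    have h2 : R = w h + T h (w t) - w t := by rw [← this]; abel
    rw [h2]; abel
  -- bounds
  have hb1 : q ((h:ℝ)⁻¹ • R - G t) ≤ ε/3 := by
    have hbd : ∀ σ ∈ Icc t (t+h), q (G σ - G t) ≤ ε/3 := by
      intro σ hσ
      refine hδ₁ σ (mem_Ici.mpr (by linarith [hσ.1])) ?_
      rw [abs_lt]
      constructor <;> [linarith [hσ.1]; linarith [hσ.2, lt_of_lt_of_le hhm (min_le_left _ _)]]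
    have hm := isRiemannIntegral_mean_le (by linarith : t ≤ t + h) hR q hq
      (by linarith : (0:ℝ) ≤ ε/3) hbd
    rw [add_sub_cancel_left] at hm
    have : (h:ℝ)⁻¹ • R - G t = h⁻¹ • (R - h • G t) := by
      rw [smul_sub, smul_smul, inv_mul_cancel₀ (ne_of_gt hh0), one_smul]
    rw [this, map_smul_eq_mul, Real.norm_eq_abs, abs_of_pos (by positivity : (0:ℝ) < h⁻¹)]
    calc h⁻¹ * q (R - h • G t) ≤ h⁻¹ * (ε/3 * h) :=
          mul_le_mul_of_nonneg_left hm (by positivity)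
      _ = ε/3 := by field_simp
  have hb2 : q ((h:ℝ)⁻¹ • w h - G 0) ≤ ε/3 := by
    have hbd : ∀ σ ∈ Icc (0:ℝ) h, q (G σ - G 0) ≤ ε/3 := by
      intro σ hσ
      refine hδ₂ σ (mem_Ici.mpr hσ.1) ?_
      rw [abs_lt]
      constructor <;> [linarith [hσ.1]; linarith [hσ.2, lt_of_lt_of_le hhm (min_le_right _ _)]]
    have hm := isRiemannIntegral_mean_le (le_of_lt hh0) (hW h (le_of_lt hh0)) q hq
      (by linarith : (0:ℝ) ≤ ε/3) hbd
    rw [sub_zero] at hm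
    have : (h:ℝ)⁻¹ • w h - G 0 = h⁻¹ • (w h - h • G 0) := by
      rw [smul_sub, smul_smul, inv_mul_cancel₀ (ne_of_gt hh0), one_smul]
    rw [this, map_smul_eq_mul, Real.norm_eq_abs, abs_of_pos (by positivity : (0:ℝ) < h⁻¹)]
    calc h⁻¹ * q (w h - h • G 0) ≤ h⁻¹ * (ε/3 * h) :=
          mul_le_mul_of_nonneg_left hm (by positivity)
      _ = ε/3 := by field_simp
  -- conclude
  have hfinal : h⁻¹ • (T h (w t) - w t) - (G t - G 0)
      = (h⁻¹ • R - G t) - (h⁻¹ • w h - G 0) := by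
    rw [hid, smul_sub]
    abel
  calc q (h⁻¹ • (T h (w t) - w t) - (G t - G 0))
      = q ((h⁻¹ • R - G t) - (h⁻¹ • w h - G 0)) := by rw [hfinal]
    _ ≤ q (h⁻¹ • R - G t) + q (h⁻¹ • w h - G 0) := by
        rw [sub_eq_add_neg]
        refine le_trans (map_add_le_add q _ _) ?_
        rw [map_neg_eq_map]
    _ ≤ ε/3 + ε/3 := add_le_add hb1 hb2
    _ < ε := by linarith

end Aux8


theorem stmt18 {X Xm1 U : Type*} [AddCommGroup X] [Module ℝ X] [UniformSpace X] [IsUniformAddGroup X]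
    [ContinuousSMul ℝ X] [LocallyConvexSpace ℝ X] [T2Space X] [CompleteSpace X]
    [AddCommGroup Xm1] [Module ℝ Xm1] [UniformSpace Xm1] [IsUniformAddGroup Xm1]
    [ContinuousSMul ℝ Xm1] [LocallyConvexSpace ℝ Xm1] [T2Space Xm1] [CompleteSpace Xm1]
    [AddCommGroup U] [Module ℝ U] [UniformSpace U] [IsUniformAddGroup U]
    [ContinuousSMul ℝ U] [LocallyConvexSpace ℝ U] [T2Space U]
    (r : ℝ) (hr : 0 < r)
    (T : ℝ → X →L[ℝ] X) (hT : IsSCQESemigroup T)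
    (Ainv : X →L[ℝ] X)
    (hAinv1 : ∀ x : X, Ainv x ∈ genDomain T)
    (hAinv2 : ∀ x : X, generator T (Ainv x) = x)
    (hAinv3 : ∀ x ∈ genDomain T, Ainv (generator T x) = x)
    (ι : X →L[ℝ] Xm1) (hιinj : Function.Injective ⇑ι) (hιind : IsInducing ⇑ι)
    (hιdense : DenseRange ⇑ι)
    (Am1 : X ≃L[ℝ] Xm1)
    (hAm1ext : ∀ x ∈ genDomain T, Am1 x = ι (generator T x))
    (Tm1 : ℝ → Xm1 →L[ℝ] Xm1) (hTm1 : IsSCQESemigroup Tm1)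
    (hext : ∀ t : ℝ, 0 ≤ t → ∀ x : X, Tm1 t (ι x) = ι (T t x))
    (hconj : ∀ t : ℝ, 0 ≤ t → ∀ z : Xm1, Tm1 t z = Am1 (T t (Am1.symm z)))
    (hgen : ∀ z : Xm1, z ∈ genDomain Tm1 ↔ z ∈ Set.range ⇑ι)
    (B : U →L[ℝ] Xm1) :
    ((∀ f : ℝ → U, ContinuousOn f (Set.Icc (0:ℝ) r) →
        ∀ t ∈ Set.Icc (0:ℝ) r,
          sgConv T (fun s => Am1.symm (B (f s))) t ∈ genDomain T) ↔
      (∀ f : ℝ → U, ContinuousOn f (Set.Icc (0:ℝ) r) →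
        sgConv Tm1 (fun s => B (f s)) r ∈ Set.range ⇑ι)) ∧
    ((∀ f : ℝ → U, ContinuousOn f (Set.Icc (0:ℝ) r) →
        ∀ t ∈ Set.Icc (0:ℝ) r,
          sgConv T (fun s => Am1.symm (B (f s))) t ∈ genDomain T) →
      ∀ f : ℝ → U, ContinuousOn f (Set.Icc (0:ℝ) r) →
        ∀ t ∈ Set.Icc (0:ℝ) r,
          sgConv Tm1 (fun s => B (f s)) t =
            ι (generator T (sgConv T (fun s => Am1.symm (B (f s))) t))) := by
  have hr0 : (0:ℝ) ≤ r := le_of_lt hr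
  -- `Am1 x ∈ range ι ↔ x ∈ genDomain T`
  have GR : ∀ x : X, Am1 x ∈ Set.range ⇑ι ↔ x ∈ genDomain T := by
    intro x
    constructor
    · rintro ⟨u, hu⟩
      have h1 : Am1 (Ainv u) = ι u := by
        rw [hAm1ext (Ainv u) (hAinv1 u), hAinv2]
      have h2 : Am1 (Ainv u) = Am1 x := by rw [h1, hu]
      have := Am1.injective h2
      rw [← this]
      exact hAinv1 u
    · intro hx
      rw [hAm1ext x hx]
      exact Set.mem_range_self _
  -- key identity K
  have K : ∀ t ∈ Set.Icc (0:ℝ) r, ∀ f : ℝ → U,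
      sgConv Tm1 (fun s => B (f s)) t
        = Am1 (sgConv T (fun s => Am1.symm (B (f s))) t) := by
    intro t htm f
    unfold sgConv
    rw [riemannIntegral_congr (g' := fun s => Am1 (T (t - s) (Am1.symm (B (f s)))))
      (fun s hs => hconj (t - s) (by linarith [hs.2]) _)]
    exact riemannIntegral_map_equiv Am1 htm.1
  -- part (a) → computation
  have hacomp : (∀ f : ℝ → U, ContinuousOn f (Set.Icc (0:ℝ) r) →
        ∀ t ∈ Set.Icc (0:ℝ) r,
          sgConv T (fun s => Am1.symm (B (f s))) t ∈ genDomain T) →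
      ∀ f : ℝ → U, ContinuousOn f (Set.Icc (0:ℝ) r) →
        ∀ t ∈ Set.Icc (0:ℝ) r,
          sgConv Tm1 (fun s => B (f s)) t =
            ι (generator T (sgConv T (fun s => Am1.symm (B (f s))) t)) := by
    intro ha f hf t htm
    rw [K t htm f]
    exact hAm1ext _ (ha f hf t htm)
  constructor
  · constructor
    · intro ha f hf
      rw [hacomp ha f hf r ⟨hr0, le_rfl⟩]
      exact Set.mem_range_self _
    · -- the hard direction
      intro hb f hf t htm
      rw [← GR]
      rw [← K t htm f]
      obtain ⟨ht0, htr⟩ := htm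
      -- continuity of s ↦ B (f s)
      have hBf : ContinuousOn (fun s => B (f s)) (Set.Icc (0:ℝ) t) :=
        (B.continuous.comp_continuousOn hf).mono
          (fun s hs => ⟨hs.1, le_trans hs.2 htr⟩)
      -- Φf exists
      have HF : IsRiemannIntegral (fun s => Tm1 (t - s) (B (f s))) 0 t
          (sgConv Tm1 (fun s => B (f s)) t) := by
        obtain ⟨y, hy⟩ := riemann_exists ht0 (conv_integrand_cont hTm1 ht0 hBf)
        unfold sgConv
        rw [riemannIntegral_eq ht0 hy]
        exact hy
      -- constant part W
      have hWc : ContinuousOn (fun σ => Tm1 σ (B (f 0))) (Icc (0:ℝ) t) :=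
        (hTm1.2.2.1 (B (f 0))).mono (fun x hx => hx.1)
      have hWex : IsRiemannIntegral (fun σ => Tm1 σ (B (f 0))) 0 t
          (riemannIntegral (fun σ => Tm1 σ (B (f 0))) 0 t) := by
        obtain ⟨y, hy⟩ := riemann_exists ht0 hWc
        rw [riemannIntegral_eq ht0 hy]
        exact hy
      set W := riemannIntegral (fun σ => Tm1 σ (B (f 0))) 0 t with hWdef
      have hWmem : W ∈ Set.range ⇑ι := by
        rw [← hgen]
        exact int_sg_mem_genDomain hTm1 (B (f 0)) ht0
      -- W is also the convolution-form integral of the constant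
      have hIc : IsRiemannIntegral (fun s => Tm1 (t - s) (B (f 0))) 0 t W := by
        have h1 := isRiemannIntegral_reflect hWex
        refine isRiemannIntegral_congr (fun s _ => ?_) h1
        show Tm1 (0 + t - s) (B (f 0)) = Tm1 (t - s) (B (f 0))
        rw [zero_add]
      -- difference part
      have hG1 : IsRiemannIntegral (fun s => Tm1 (t - s) (B (f s - f 0))) 0 t
          (sgConv Tm1 (fun s => B (f s)) t - W) := by
        have := isRiemannIntegral_sub HF hIc
        refine isRiemannIntegral_congr (fun s _ => ?_) this
        show Tm1 (t - s) (B (f s)) - Tm1 (t - s) (B (f 0)) = Tm1 (t - s) (B (f s - f 0))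
        rw [map_sub, map_sub]
      -- shifted function f'
      set f' : ℝ → U := fun s => f (max (s - (r - t)) 0) - f 0 with hf'def
      have hf'c : ContinuousOn f' (Set.Icc (0:ℝ) r) := by
        have hm : Continuous (fun s : ℝ => max (s - (r - t)) 0) :=
          (continuous_id.sub continuous_const).max continuous_const
        have hmt : MapsTo (fun s : ℝ => max (s - (r - t)) 0) (Set.Icc 0 r) (Set.Icc 0 r) := by
          intro s hs
          constructor
          · exact le_max_right _ _
          · rw [max_le_iff]
            constructor <;> [linarith [hs.2]; exact hr0]
        exact (hf.comp hm.continuousOn hmt).sub continuousOn_const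
      have hbf' := hb f' hf'c
      -- identify sgConv Tm1 (B ∘ f') r
      have hH : IsRiemannIntegral (fun s => Tm1 (r - s) (B (f' s))) 0 r
          (sgConv Tm1 (fun s => B (f' s)) r) := by
        have hBf' : ContinuousOn (fun s => B (f' s)) (Set.Icc (0:ℝ) r) :=
          B.continuous.comp_continuousOn hf'c
        obtain ⟨y, hy⟩ := riemann_exists hr0 (conv_integrand_cont hTm1 hr0 hBf')
        unfold sgConv
        rw [riemannIntegral_eq hr0 hy]
        exact hy
      have hpiece1 : IsRiemannIntegral (fun s => Tm1 (r - s) (B (f' s))) 0 (r - t) 0 := by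
        refine isRiemannIntegral_zero (fun s hs => ?_)
        have : f' s = 0 := by
          simp only [hf'def]
          rw [max_eq_right (by linarith [hs.2] : s - (r - t) ≤ 0)]
          exact sub_self _
        rw [this, map_zero, map_zero]
      have hpiece2 : IsRiemannIntegral (fun s => Tm1 (r - s) (B (f' s))) (r - t) r
          (sgConv Tm1 (fun s => B (f s)) t - W) := by
        have hsh := isRiemannIntegral_shift (h := r - t) hG1
        rw [zero_add, show t + (r - t) = r by ring] at hsh
        refine isRiemannIntegral_congr (fun s hs => ?_) hsh
        show Tm1 (t - (s - (r - t))) (B (f (s - (r - t)) - f 0))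
            = Tm1 (r - s) (B (f' s))
        have e1 : t - (s - (r - t)) = r - s := by ring
        have e2 : f' s = f (s - (r - t)) - f 0 := by
          simp only [hf'def]
          rw [max_eq_left (by linarith [hs.1] : (0:ℝ) ≤ s - (r - t))]
        rw [e1, e2]
      have hconcat := isRiemannIntegral_concat_eq (by linarith : (0:ℝ) ≤ r - t)
        (by linarith : r - t ≤ r) hpiece1 hpiece2 hH
      rw [zero_add] at hconcat
      -- conclude membership
      have hy1mem : sgConv Tm1 (fun s => B (f s)) t - W ∈ Set.range ⇑ι := by
        rw [← hconcat]
        exact hbf'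
      obtain ⟨u1, hu1⟩ := hy1mem
      obtain ⟨u2, hu2⟩ := hWmem
      refine ⟨u1 + u2, ?_⟩
      rw [map_add, hu1, hu2]
      abel
  · exact hacomp
end
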